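/- arXiv:1102.4267 — 4 statements merged into one kernel-verified Lean document; each statement's English description precedes it below -/
import Mathlib

section
/- Let D = D_{2^n} × C_{2^m} with n ≥ 3 and m ≥ 0. Then the automorphism group Aut(D) is a 2-group, i.e., |Aut(D)| is a power of 2. -/
/-- `D_{2^n} × C_{2^m}`. -/
abbrev DC (n m : ℕ) : Type :=
  DihedralGroup (2 ^ (n - 1)) × Multiplicative (ZMod (2 ^ m))


open DihedralGroup

/-- number theory: odd power roots of unity mod 2^s are trivial -/
lemma NT (s b e : ℕ) (hb : Odd b) (h : (e : ZMod (2^s))^b = 1) : (e : ZMod (2^s)) = 1 := by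
  rcases Nat.eq_zero_or_pos s with hs | hs
  · subst hs
    have : (2:ℕ)^0 = 1 := rfl
    rw [this] at h ⊢
    exact Subsingleton.elim _ _
  haveI : NeZero (2^s) := ⟨pow_ne_zero _ two_ne_zero⟩
  have hb0 : b ≠ 0 := by rintro rfl; simp at hb
  have hu : IsUnit ((e : ZMod (2^s))) := IsUnit.of_pow_eq_one h hb0
  have h1 : hu.unit ^ b = 1 := by
    ext; push_cast; simpa using h
  have hd1 : orderOf hu.unit ∣ b := orderOf_dvd_of_pow_eq_one h1
  have hd2 : orderOf hu.unit ∣ 2^(s-1) := by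
    have := orderOf_dvd_card (x := hu.unit)
    rw [ZMod.card_units_eq_totient, Nat.totient_prime_pow Nat.prime_two hs] at this
    norm_num at this
    exact this
  have hcop : Nat.Coprime (2^(s-1)) b := by
    apply Nat.Coprime.pow_left
    refine Nat.prime_two.coprime_iff_not_dvd.mpr ?_
    have := Nat.odd_iff.mp hb
    omega
  have h2 : orderOf hu.unit = 1 := Nat.eq_one_of_dvd_coprimes hcop hd2 hd1
  have h3 := orderOf_eq_one_iff.mp h2
  have h4 : ((hu.unit : (ZMod (2^s))ˣ) : ZMod (2^s)) = 1 := by rw [h3]; rfl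
  rwa [IsUnit.unit_spec] at h4

/-- solutions of 2x = 0 in ZMod (2^m) -/
lemma ord2 (m : ℕ) (x : ZMod (2^m)) (h : 2 * x = 0) :
    x = 0 ∨ x = ((2^(m-1) : ℕ) : ZMod (2^m)) := by
  haveI : NeZero (2^m) := ⟨pow_ne_zero _ two_ne_zero⟩
  have hx : x = ((x.val : ℕ) : ZMod (2^m)) := by simp [ZMod.natCast_val, ZMod.cast_id]
  have hlt : x.val < 2^m := ZMod.val_lt x
  rcases Nat.eq_zero_or_pos m with hm | hm
  · subst hm
    left
    have hv : x.val = 0 := by simpa using hlt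
    rw [hx, hv]
    simp
  have h2 : ((2 * x.val : ℕ) : ZMod (2^m)) = ((0:ℕ) : ZMod (2^m)) := by
    push_cast
    rw [← hx, h]
  rw [ZMod.natCast_eq_natCast_iff] at h2
  have hdvd : 2^m ∣ 2 * x.val := (Nat.modEq_zero_iff_dvd).mp h2
  have hm' : 2^m = 2 * 2^(m-1) := by
    rw [← pow_succ']
    congr 1
    omega
  obtain ⟨c, hc⟩ := hdvd
  have hc' : 2 * x.val = 2 * 2^(m-1) * c := by rw [← hm']; exact hc
  have hval : x.val = 2^(m-1) * c := by
    apply Nat.eq_of_mul_eq_mul_left (show 0 < 2 by norm_num)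
    rw [hc', mul_assoc]
  have hc2 : c < 2 := by
    by_contra hcon
    have h0 : 0 < 2^(m-1) := Nat.pow_pos (by norm_num)
    have : 2 * 2^(m-1) ≤ 2^(m-1) * c := by nlinarith
    omega
  interval_cases c
  · left; rw [hx, hval]; simp
  · right; rw [hx, hval]; simp

section IterLemmas

variable {G : Type*} [Group G] (ψ : MulAut G)

lemma fixpow {f : G} (hf : ψ f = f) : ∀ j, (ψ^j) f = f := by
  intro j
  induction j with
  | zero => rfl
  | succ j ih => rw [pow_succ, MulAut.mul_apply, hf, ih]

lemma iterL {s f : G} (hf : ψ f = f) (h : ψ s = f * s) : ∀ j, (ψ^j) s = f^j * s := by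
  intro j
  induction j with
  | zero => simp
  | succ j ih =>
    rw [pow_succ, MulAut.mul_apply, h, map_mul, fixpow _ hf, ih, ← mul_assoc, ← pow_succ']

lemma iterR {s h : G} (hh : ψ h = h) (hs : ψ s = s * h) : ∀ j, (ψ^j) s = s * h^j := by
  intro j
  induction j with
  | zero => simp
  | succ j ih =>
    rw [pow_succ, MulAut.mul_apply, hs, map_mul, fixpow _ hh, ih, mul_assoc, ← pow_succ]

lemma iterP {x : G} {e : ℕ} (h : ψ x = x^e) : ∀ j, (ψ^j) x = x^(e^j) := by
  intro j
  induction j with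
  | zero => simp
  | succ j ih =>
    rw [pow_succ, MulAut.mul_apply, h, map_pow, ih, ← pow_mul, ← pow_succ]

lemma oddpow {f : G} (hf : f^2 = 1) {b : ℕ} (hb : Odd b) : f^b = f := by
  obtain ⟨t, rfl⟩ := hb
  rw [pow_add, pow_mul, hf, one_pow, one_mul, pow_one]

end IterLemmas

lemma inv_r {n : ℕ} (i : ZMod n) : (r i)⁻¹ = r (-i) := rfl
lemma inv_sr {n : ℕ} (i : ZMod n) : (sr i)⁻¹ = sr i := rfl

lemma powR {n : ℕ} (i : ZMod n) (t : ℕ) : (r i)^t = r ((t : ZMod n) * i) := by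
  induction t with
  | zero => rw [pow_zero, Nat.cast_zero, zero_mul]; rfl
  | succ t ih =>
    rw [pow_succ, ih, r_mul_r]
    congr 1
    push_cast
    ring

abbrev Gkm (k m : ℕ) := DihedralGroup (2^k) × Multiplicative (ZMod (2^m))

lemma comm_form {k m : ℕ} (g h : Gkm k m) :
    ∃ t : ZMod (2^k), g * h * g⁻¹ * h⁻¹ = (r (2*t), 1) := by
  obtain ⟨g1, g2⟩ := g; obtain ⟨h1, h2⟩ := h
  have hc : g2 * h2 * g2⁻¹ * h2⁻¹ = 1 := by
    rw [mul_comm g2 h2]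
    group
  cases g1 with
  | r i =>
    cases h1 with
    | r j =>
      refine ⟨0, ?_⟩
      simp only [Prod.mk_mul_mk, Prod.inv_mk, _root_.inv_r, r_mul_r, hc]
      simp only [r_mul_r, Prod.mk.injEq]
      refine ⟨?_, trivial⟩
      congr 1; ring
    | sr j =>
      refine ⟨i, ?_⟩
      simp only [Prod.mk_mul_mk, Prod.inv_mk, _root_.inv_r, _root_.inv_sr, r_mul_sr, sr_mul_sr, sr_mul_r, hc]
      simp only [r_mul_r, Prod.mk.injEq]
      refine ⟨?_, trivial⟩
      congr 1; ring
  | sr i =>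
    cases h1 with
    | r j =>
      refine ⟨-j, ?_⟩
      simp only [Prod.mk_mul_mk, Prod.inv_mk, _root_.inv_r, _root_.inv_sr, sr_mul_r, r_mul_sr, sr_mul_sr, hc]
      simp only [r_mul_r, Prod.mk.injEq]
      refine ⟨?_, trivial⟩
      congr 1; ring
    | sr j =>
      refine ⟨j - i, ?_⟩
      simp only [Prod.mk_mul_mk, Prod.inv_mk, _root_.inv_sr, sr_mul_sr, r_mul_sr, sr_mul_r, r_mul_r, hc]
      simp only [r_mul_r, Prod.mk.injEq]
      refine ⟨?_, trivial⟩
      congr 1; ring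

lemma two_ne {k : ℕ} (hk : 2 ≤ k) : (2 : ZMod (2^k)) ≠ 0 := by
  intro h
  have h' : ((2:ℕ) : ZMod (2^k)) = 0 := by push_cast; exact h
  rw [ZMod.natCast_eq_zero_iff] at h'
  have h4 : (2:ℕ)^2 ≤ 2^k := Nat.pow_le_pow_right (by norm_num) hk
  have := Nat.le_of_dvd (by norm_num) h'
  omega

lemma central_form {k m : ℕ} (hk : 2 ≤ k) (g : Gkm k m)
    (hX : g * (r 1, 1) = (r 1, 1) * g) (hY : g * (sr 0, 1) = (sr 0, 1) * g) :
    ∃ (d : ZMod (2^k)) (c : Multiplicative (ZMod (2^m))), g = (r d, c) ∧ 2 * d = 0 := by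
  obtain ⟨g1, c⟩ := g
  cases g1 with
  | r d =>
    refine ⟨d, c, rfl, ?_⟩
    simp only [Prod.mk_mul_mk, r_mul_sr, sr_mul_r, mul_one, one_mul, Prod.mk.injEq] at hY
    have := hY.1
    have hd : (0 : ZMod (2^k)) - d = 0 + d := by
      injection this
    have : d + d = 0 := by
      rw [zero_sub, zero_add] at hd
      linear_combination -hd
    rw [two_mul]
    exact this
  | sr d =>
    exfalso
    simp only [Prod.mk_mul_mk, sr_mul_r, r_mul_sr, mul_one, one_mul, Prod.mk.injEq] at hX
    have := hX.1
    have hd : d + 1 = d - 1 := by injection this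
    have : (2 : ZMod (2^k)) = 0 := by
      have := sub_eq_zero.mpr hd
      rw [show d + 1 - (d - 1) = 2 by ring] at this
      exact this
    exact two_ne hk this

lemma prodPow {A B : Type*} [Monoid A] [Monoid B] (a : A) (b : B) (t : ℕ) :
    ((a, b) : A × B)^t = (a^t, b^t) := by
  induction t with
  | zero => rw [pow_zero, pow_zero, pow_zero]; rfl
  | succ t ih => rw [pow_succ, ih, Prod.mk_mul_mk, ← pow_succ, ← pow_succ]

lemma powM {M : ℕ} (x : ZMod M) (t : ℕ) :
    (Multiplicative.ofAdd x)^t = Multiplicative.ofAdd ((t : ZMod M) * x) := by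
  induction t with
  | zero =>
    rw [pow_zero, Nat.cast_zero, zero_mul]
    rfl
  | succ t ih =>
    rw [pow_succ, ih, ← ofAdd_add]
    congr 1
    push_cast
    ring

def sig (c : ℕ) : ℕ → ℕ
  | 0 => 0
  | (j+1) => 1 + c * sig c j

lemma sig_mod2 {c : ℕ} (h : c % 2 = 1) : ∀ j, sig c j % 2 = j % 2 := by
  intro j
  induction j with
  | zero => rfl
  | succ j ih =>
    show (1 + c * sig c j) % 2 = (j+1) % 2
    have h2 := Nat.mul_mod c (sig c j) 2
    rw [h, ih] at h2
    omega

lemma key {k m : ℕ} (hk : 2 ≤ k) (ψ : MulAut (Gkm k m)) {b : ℕ} (hb : Odd b)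
    (hψb : ψ ^ b = 1) : ψ = 1 := by
  haveI : NeZero ((2:ℕ)^k) := ⟨pow_ne_zero _ two_ne_zero⟩
  haveI : NeZero ((2:ℕ)^m) := ⟨pow_ne_zero _ two_ne_zero⟩
  have hbodd : ¬ (2 ∣ b) := by have := Nat.odd_iff.mp hb; omega
  -- every solution of 2d = 0 is even
  have half : ∀ d : ZMod (2^k), 2 * d = 0 → ∃ i : ZMod (2^k), d = 2 * i := by
    intro d hd
    rcases ord2 k d hd with h | h
    · exact ⟨0, by rw [h, mul_zero]⟩
    · refine ⟨((2^(k-2) : ℕ) : ZMod (2^k)), ?_⟩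
      rw [h]
      have h1 : (2:ℕ)^(k-1) = 2 * 2^(k-2) := by
        rw [← pow_succ']
        congr 1
        omega
      rw [h1]
      push_cast
      ring
  -- Step A : ψ fixes (r 2, 1)
  have hYX : (((sr 0 : DihedralGroup (2^k)), (1:Multiplicative (ZMod (2^m)))) * (r 1, 1) *
      ((sr 0 : DihedralGroup (2^k)), (1:Multiplicative (ZMod (2^m))))⁻¹ * ((r 1 : DihedralGroup (2^k)), (1:Multiplicative (ZMod (2^m))))⁻¹ : Gkm k m) = (r (-2), 1) := by
    simp only [Prod.mk_mul_mk, Prod.inv_mk, _root_.inv_r, _root_.inv_sr, sr_mul_r, sr_mul_sr, r_mul_r,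
      one_mul, mul_one, inv_one, Prod.mk.injEq, DihedralGroup.r.injEq]
    exact ⟨by ring, trivial⟩
  obtain ⟨t, ht⟩ := comm_form (ψ ((sr 0, 1) : Gkm k m)) (ψ ((r 1, 1) : Gkm k m))
  have h1 : ψ ((r (-2), 1) : Gkm k m) = (r (2*t), 1) := by
    rw [← hYX, map_mul, map_mul, map_mul, map_inv, map_inv]
    exact ht
  have hinv : (((r (-2), 1) : Gkm k m))⁻¹ = ((r 2, 1) : Gkm k m) := by
    rw [Prod.inv_mk, _root_.inv_r, inv_one, neg_neg]
  have h2 : ψ ((r 2, 1) : Gkm k m) = (r (2 * (-t)), 1) := by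
    rw [← hinv, map_inv, h1, Prod.inv_mk, _root_.inv_r, inv_one, Prod.mk.injEq]
    refine ⟨?_, rfl⟩
    congr 1
    ring
  set e := (-t).val with he_def
  have hcast : ((e : ℕ) : ZMod (2^k)) = -t := by
    rw [he_def, ZMod.natCast_val, ZMod.cast_id]
  have hpowe : ((r 2, 1) : Gkm k m)^e = (r (2 * (-t)), 1) := by
    have h3 : ((r 2 : DihedralGroup (2^k)))^e = r (2 * (-t)) := by
      rw [powR, hcast]
      congr 1
      ring
    rw [prodPow, h3, one_pow]
  have he : ψ ((r 2, 1) : Gkm k m) = ((r 2, 1) : Gkm k m)^e := by rw [h2, hpowe]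
  have hAb := iterP ψ he b
  rw [hψb, MulAut.one_apply] at hAb
  rw [prodPow, powR, one_pow, Prod.mk.injEq, DihedralGroup.r.injEq] at hAb
  have h2eq : (2 : ZMod (2^k)) = ((e^b : ℕ) : ZMod (2^k)) * 2 := hAb.1
  have hmod : 2 * e^b ≡ 2 * 1 [MOD 2^k] := by
    rw [← ZMod.natCast_eq_natCast_iff]
    push_cast
    push_cast at h2eq
    linear_combination -h2eq
  have hk2 : (2:ℕ)^k = 2 * 2^(k-1) := by
    rw [← pow_succ']
    congr 1
    omega
  rw [hk2] at hmod
  have hmod2 : e^b ≡ 1 [MOD 2^(k-1)] := Nat.ModEq.mul_left_cancel' two_ne_zero hmod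
  have hcast2 : ((e : ℕ) : ZMod (2^(k-1)))^b = 1 := by
    have h4 := (ZMod.natCast_eq_natCast_iff _ _ _).mpr hmod2
    push_cast at h4
    exact h4
  have hE := NT (k-1) b e hb hcast2
  have hmod3 : e ≡ 1 [MOD 2^(k-1)] := by
    have h5 : ((e : ℕ) : ZMod (2^(k-1))) = ((1:ℕ) : ZMod (2^(k-1))) := by push_cast; exact hE
    exact (ZMod.natCast_eq_natCast_iff _ _ _).mp h5
  have hmod4 : 2 * e ≡ 2 * 1 [MOD 2^k] := by
    rw [hk2]
    exact Nat.ModEq.mul_left' 2 hmod3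
  have hfin : ((2*e : ℕ) : ZMod (2^k)) = ((2*1 : ℕ) : ZMod (2^k)) :=
    (ZMod.natCast_eq_natCast_iff _ _ _).mpr hmod4
  push_cast at hfin
  have hA : ψ ((r 2, 1) : Gkm k m) = (r 2, 1) := by
    rw [he, prodPow, powR, one_pow, Prod.mk.injEq, DihedralGroup.r.injEq]
    refine ⟨?_, rfl⟩
    calc ((e:ℕ) : ZMod (2^k)) * 2 = 2 * e := by ring
    _ = 2 := by rw [hfin]
  -- even rotations are fixed
  have hEven : ∀ i : ZMod (2^k), ψ ((r (2*i), 1) : Gkm k m) = (r (2*i), 1) := by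
    intro i
    have h1 : ((r (2*i), 1) : Gkm k m) = ((r 2, 1) : Gkm k m)^(i.val) := by
      rw [prodPow, powR, one_pow, Prod.mk.injEq, DihedralGroup.r.injEq]
      refine ⟨?_, rfl⟩
      rw [ZMod.natCast_val, ZMod.cast_id]
      ring
    rw [h1, map_pow, hA]
  -- images of central elements commute with everything
  have conj_comm : ∀ w : Gkm k m, (∀ g, w * g = g * w) → ∀ g, ψ w * g = g * ψ w := by
    intro w hw g
    have h5 := congrArg ψ (hw (ψ.symm g))
    rw [map_mul, map_mul, MulEquiv.apply_symm_apply] at h5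
    exact h5
  -- involutions of the second factor are fixed
  have hT : ∀ c : Multiplicative (ZMod (2^m)), c^2 = 1 → ψ ((1, c) : Gkm k m) = (1, c) := by
    intro c hc
    by_cases hc1 : c = 1
    · rw [hc1]
      exact map_one ψ
    · have hcen : ∀ g : Gkm k m, ((1:DihedralGroup (2^k)), c) * g = g * (1, c) := by
        rintro ⟨g1, g2⟩
        rw [Prod.mk_mul_mk, Prod.mk_mul_mk, one_mul, mul_one, mul_comm]
      obtain ⟨d, c₂, hform, hd⟩ :=
        central_form hk (ψ ((1, c) : Gkm k m)) (conj_comm _ hcen _) (conj_comm _ hcen _)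
      have hsq : (ψ ((1, c) : Gkm k m))^2 = 1 := by
        rw [← map_pow, prodPow, one_pow, hc, ← Prod.one_eq_mk, map_one]
      rw [hform, prodPow] at hsq
      have hc₂ : c₂^2 = 1 := (Prod.mk_eq_one.mp hsq).2
      obtain ⟨i, hi⟩ := half d hd
      have hrd : ψ ((r d, 1) : Gkm k m) = (r d, 1) := by rw [hi]; exact hEven i
      by_cases h21 : c₂ = 1
      · exfalso
        apply hc1
        have h6 : ψ ((1,c) : Gkm k m) = ψ ((r d, 1) : Gkm k m) := by rw [hform, h21, hrd]
        have h7 := ψ.injective h6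
        rw [Prod.mk.injEq] at h7
        exact h7.2
      · have toadd2 : ∀ c' : Multiplicative (ZMod (2^m)), c'^2 = 1 →
            2 * (Multiplicative.toAdd c') = 0 := by
          intro c' hc'
          have h8 : Multiplicative.toAdd (c'^2) = Multiplicative.toAdd (1 : Multiplicative (ZMod (2^m))) := by rw [hc']
          rw [toAdd_pow, toAdd_one, nsmul_eq_mul] at h8
          push_cast at h8
          exact h8
        have hcc : c₂ = c := by
          have h9 := ord2 m _ (toadd2 c hc)
          have h10 := ord2 m _ (toadd2 c₂ hc₂)
          rcases h9 with h9 | h9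
          · exact absurd (by rw [← ofAdd_toAdd c, h9, ofAdd_zero]) hc1
          rcases h10 with h10 | h10
          · exact absurd (by rw [← ofAdd_toAdd c₂, h10, ofAdd_zero]) h21
          · rw [← ofAdd_toAdd c₂, ← ofAdd_toAdd c, h9, h10]
        rw [hcc] at hform
        have hstep : ψ ((1,c) : Gkm k m) = ((r d, 1) : Gkm k m) * (1, c) := by
          rw [hform, Prod.mk_mul_mk, mul_one, one_mul]
        have hit := iterL ψ hrd hstep b
        rw [hψb, MulAut.one_apply] at hit
        have hf2 : ((r d, 1) : Gkm k m)^2 = 1 := by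
          rw [prodPow, one_pow, powR, Prod.mk_eq_one]
          refine ⟨?_, rfl⟩
          rw [one_def, DihedralGroup.r.injEq]
          push_cast
          exact hd
        rw [oddpow hf2 hb] at hit
        rw [hstep, right_eq_mul.mp hit, one_mul]
  -- step X
  have hsqX : (ψ ((r 1, 1) : Gkm k m))^2 = (r 2, 1) := by
    rw [← map_pow]
    have h1 : ((r 1, 1) : Gkm k m)^2 = (r 2, 1) := by
      rw [prodPow, one_pow, powR, Prod.mk.injEq, DihedralGroup.r.injEq]
      refine ⟨?_, rfl⟩
      push_cast
      ring
    rw [h1, hA]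
  rcases hgx : ψ ((r 1, 1) : Gkm k m) with ⟨g1, c⟩
  rw [hgx] at hsqX
  cases g1 with
  | sr a =>
    exfalso
    rw [prodPow, pow_two, sr_mul_sr, sub_self, Prod.mk.injEq, DihedralGroup.r.injEq] at hsqX
    exact two_ne hk hsqX.1.symm
  | r a =>
    rw [prodPow, powR, Prod.mk.injEq, DihedralGroup.r.injEq] at hsqX
    have ha : 2 * a = 2 := by
      have := hsqX.1
      push_cast at this
      exact this
    have hcX : c^2 = 1 := hsqX.2
    have hd1 : 2 * (a - 1) = 0 := by linear_combination ha
    obtain ⟨i, hi⟩ := half _ hd1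
    have hfX : ψ ((r 1, 1) : Gkm k m) = ((r (a-1), c) : Gkm k m) * (r 1, 1) := by
      rw [hgx, Prod.mk_mul_mk, r_mul_r, mul_one, sub_add_cancel]
    have hffix : ψ ((r (a-1), c) : Gkm k m) = (r (a-1), c) := by
      have hsplit : ((r (a-1), c) : Gkm k m) = (r (a-1), 1) * (1, c) := by
        rw [Prod.mk_mul_mk, mul_one, one_mul]
      have h7 : ψ ((r (a-1), 1) : Gkm k m) = (r (a-1), 1) := by rw [hi]; exact hEven i
      rw [hsplit, map_mul, h7, hT c hcX, ← hsplit]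
    have hf2 : ((r (a-1), c) : Gkm k m)^2 = 1 := by
      rw [prodPow, powR, Prod.mk_eq_one, hcX]
      refine ⟨?_, rfl⟩
      rw [one_def, DihedralGroup.r.injEq]
      push_cast
      exact hd1
    have hit := iterL ψ hffix hfX b
    rw [hψb, MulAut.one_apply, oddpow hf2 hb] at hit
    have hX : ψ ((r 1, 1) : Gkm k m) = (r 1, 1) := by
      rw [hfX, right_eq_mul.mp hit, one_mul]
    -- all rotations fixed
    have hR : ∀ i : ZMod (2^k), ψ ((r i, 1) : Gkm k m) = (r i, 1) := by
      intro j
      have h1 : ((r j, 1) : Gkm k m) = ((r 1, 1) : Gkm k m)^(j.val) := by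
        rw [prodPow, one_pow, r_one_pow, ZMod.natCast_val, ZMod.cast_id]
      rw [h1, map_pow, hX]
    -- step Y
    have hYrel : (((sr 0, 1) : Gkm k m)) * (r 1, 1) * ((sr 0, 1) : Gkm k m)⁻¹ =
        ((r 1, 1) : Gkm k m)⁻¹ := by
      simp only [Prod.mk_mul_mk, Prod.inv_mk, _root_.inv_sr, _root_.inv_r, sr_mul_r, sr_mul_sr, one_mul,
        mul_one, inv_one, Prod.mk.injEq, DihedralGroup.r.injEq]
      exact ⟨by ring, trivial⟩
    have hconjY := congrArg ψ hYrel
    rw [map_mul, map_mul, map_inv, map_inv, hX] at hconjY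
    rcases hgy : ψ ((sr 0, 1) : Gkm k m) with ⟨g2, cy⟩
    rw [hgy] at hconjY
    cases g2 with
    | r a =>
      exfalso
      simp only [Prod.inv_mk, _root_.inv_r, inv_one, Prod.mk_mul_mk, r_mul_r, mul_one,
        Prod.mk.injEq, DihedralGroup.r.injEq] at hconjY
      have h20 : (2 : ZMod (2^k)) = 0 := by linear_combination hconjY.1
      exact two_ne hk h20
    | sr a =>
      have hsqY : ((sr a, cy) : Gkm k m)^2 = 1 := by
        rw [← hgy, ← map_pow]
        have h1 : ((sr 0, 1) : Gkm k m)^2 = 1 := by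
          rw [prodPow, one_pow, pow_two, sr_mul_sr, sub_self, Prod.mk_eq_one]
          exact ⟨one_def.symm, rfl⟩
        rw [h1, map_one]
      have hcY2 : cy^2 = 1 := by
        rw [prodPow, Prod.mk_eq_one] at hsqY
        exact hsqY.2
      have hstep : ψ ((sr 0, 1) : Gkm k m) = (sr 0, 1) * ((r a, cy) : Gkm k m) := by
        rw [hgy, Prod.mk_mul_mk, sr_mul_r, one_mul, zero_add]
      have hhfix : ψ ((r a, cy) : Gkm k m) = (r a, cy) := by
        have hsplit : ((r a, cy) : Gkm k m) = (r a, 1) * (1, cy) := by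
          rw [Prod.mk_mul_mk, mul_one, one_mul]
        rw [hsplit, map_mul, hR a, hT cy hcY2, ← hsplit]
      have hit2 := iterR ψ hhfix hstep b
      rw [hψb, MulAut.one_apply] at hit2
      have hb1 : ((r a, cy) : Gkm k m)^b = 1 := left_eq_mul.mp hit2
      rw [prodPow, powR, Prod.mk_eq_one] at hb1
      have hc1 : cy = 1 := by rw [← oddpow hcY2 hb]; exact hb1.2
      have ha0 : a = 0 := by
        have h8 : ((b:ℕ) : ZMod (2^k)) * a = 0 := by
          have h9 := hb1.1
          rw [one_def, DihedralGroup.r.injEq] at h9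
          exact h9
        have hu : IsUnit ((b:ℕ) : ZMod (2^k)) := by
          rw [ZMod.isUnit_iff_coprime]
          exact Nat.Coprime.pow_right _ ((Nat.prime_two.coprime_iff_not_dvd.mpr hbodd).symm)
        exact (hu.mul_right_eq_zero).mp h8
      have hYfix : ψ ((sr 0, 1) : Gkm k m) = (sr 0, 1) := by
        rw [hgy, ha0, hc1]
      have hSR : ∀ i : ZMod (2^k), ψ ((sr i, 1) : Gkm k m) = (sr i, 1) := by
        intro j
        have h1 : ((sr j, 1) : Gkm k m) = (sr 0, 1) * (r j, 1) := by
          rw [Prod.mk_mul_mk, sr_mul_r, zero_add, one_mul]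
        rw [h1, map_mul, hYfix, hR]
      -- step Z
      have hZfix : ψ ((1, Multiplicative.ofAdd (1 : ZMod (2^m))) : Gkm k m)
          = (1, Multiplicative.ofAdd (1 : ZMod (2^m))) := by
        rcases Nat.eq_zero_or_pos m with hm | hm
        · subst hm
          have h9 : ((1:ℕ) : ZMod (2^0)) = 0 := by
            rw [ZMod.natCast_eq_zero_iff]
            norm_num
          have h10 : (1 : ZMod (2^0)) = 0 := by push_cast at h9; exact h9
          rw [h10, ofAdd_zero, ← Prod.one_eq_mk, map_one]
        · have hZcen : ∀ g : Gkm k m,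
              ((1:DihedralGroup (2^k)), Multiplicative.ofAdd (1 : ZMod (2^m))) * g = g * (1, Multiplicative.ofAdd (1 : ZMod (2^m))) := by
            rintro ⟨g1, g2⟩
            rw [Prod.mk_mul_mk, Prod.mk_mul_mk, one_mul, mul_one, mul_comm]
          obtain ⟨d, cz, hform, hd⟩ :=
            central_form hk (ψ ((1, Multiplicative.ofAdd (1 : ZMod (2^m))) : Gkm k m))
              (conj_comm _ hZcen _) (conj_comm _ hZcen _)
          obtain ⟨i2, hi2⟩ := half d hd
          have hrd : ψ ((r d, 1) : Gkm k m) = (r d, 1) := by rw [hi2]; exact hEven i2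
          set c' : ℕ := (Multiplicative.toAdd cz).val with hc'def
          have hzc : ((1:DihedralGroup (2^k)), cz)
              = ((1, Multiplicative.ofAdd (1 : ZMod (2^m))) : Gkm k m)^c' := by
            rw [prodPow, one_pow, powM, mul_one, hc'def, ZMod.natCast_val, ZMod.cast_id,
              ofAdd_toAdd]
          have hψZ : ψ ((1, Multiplicative.ofAdd (1 : ZMod (2^m))) : Gkm k m)
              = ((r d, 1) : Gkm k m) * ((1, Multiplicative.ofAdd (1 : ZMod (2^m))) : Gkm k m)^c' := by
            rw [hform, ← hzc, Prod.mk_mul_mk, mul_one, one_mul]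
          have hFZ : Commute ((r d, 1) : Gkm k m) ((1, Multiplicative.ofAdd (1 : ZMod (2^m))) : Gkm k m) := by
            show _ * _ = _ * _
            rw [Prod.mk_mul_mk, Prod.mk_mul_mk, one_mul, mul_one, one_mul, mul_one]
          have iterZ : ∀ j, (ψ^j) ((1, Multiplicative.ofAdd (1 : ZMod (2^m))) : Gkm k m)
              = ((r d, 1) : Gkm k m)^(sig c' j) * ((1, Multiplicative.ofAdd (1 : ZMod (2^m))) : Gkm k m)^(c'^j) := by
            intro j
            induction j with
            | zero =>
              rw [pow_zero, MulAut.one_apply, show sig c' 0 = 0 from rfl, pow_zero, pow_zero,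
                pow_one, one_mul]
            | succ j ih =>
              rw [pow_succ, MulAut.mul_apply, hψZ, map_mul, map_pow, fixpow ψ hrd, ih]
              have hcp := ((hFZ.pow_pow (sig c' j) (c'^j)).mul_pow c')
              rw [hcp, ← pow_mul, ← pow_mul, ← mul_assoc, ← pow_succ']
              have e1 : ((r d, 1) : Gkm k m)^(sig c' j * c' + 1)
                  = ((r d, 1) : Gkm k m)^(sig c' (j+1)) := by
                rw [show sig c' (j+1) = 1 + c' * sig c' j from rfl]
                congr 1
                ring
              have e2 : (((1, Multiplicative.ofAdd (1 : ZMod (2^m))) : Gkm k m))^(c'^j * c')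
                  = (((1, Multiplicative.ofAdd (1 : ZMod (2^m))) : Gkm k m))^(c'^(j+1)) := by
                rw [← pow_succ]
              rw [e1, e2]
          have hitZ := iterZ b
          rw [hψb, MulAut.one_apply] at hitZ
          rw [prodPow, prodPow, powR, powM, one_pow, one_pow, Prod.mk_mul_mk, one_mul, mul_one,
            Prod.mk.injEq] at hitZ
          have h2nd := congrArg Multiplicative.toAdd hitZ.2
          rw [toAdd_ofAdd, toAdd_ofAdd] at h2nd
          have hczb : ((c' : ℕ) : ZMod (2^m))^b = 1 := by
            rw [mul_one] at h2nd
            push_cast at h2nd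
            rw [← h2nd]
          have hcz1 : ((c' : ℕ) : ZMod (2^m)) = 1 := NT m b c' hb hczb
          have hc'mod : c' ≡ 1 [MOD 2^m] := by
            refine (ZMod.natCast_eq_natCast_iff _ _ _).mp ?_
            push_cast
            exact hcz1
          have hc'odd : c' % 2 = 1 := by
            have h2d : (2:ℕ) ∣ 2^m := dvd_pow_self 2 (by omega : m ≠ 0)
            have h11 := Nat.ModEq.of_dvd h2d hc'mod
            have : c' % 2 = 1 % 2 := h11
            omega
          have hsigodd : sig c' b % 2 = 1 := by
            rw [sig_mod2 hc'odd b]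
            exact Nat.odd_iff.mp hb
          have hsd : ((sig c' b : ℕ) : ZMod (2^k)) * d = d := by
            obtain ⟨u, hu⟩ : ∃ u, sig c' b = 2*u + 1 := ⟨sig c' b / 2, by omega⟩
            rw [hu]
            push_cast
            linear_combination (u : ZMod (2^k)) * hd
          have hd0 : d = 0 := by
            have h1st := hitZ.1
            rw [hsd, one_def, DihedralGroup.r.injEq] at h1st
            exact h1st.symm
          rw [hψZ, hd0, one_def.symm, ← Prod.one_eq_mk, one_mul, prodPow, one_pow, powM, mul_one,
            hcz1]
      -- conclusion: ψ is the identity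
      refine MulEquiv.ext ?_
      rintro ⟨g1, cg⟩
      have hC : ψ ((1, cg) : Gkm k m) = (1, cg) := by
        have hsplit : ((1:DihedralGroup (2^k)), cg)
            = ((1, Multiplicative.ofAdd (1 : ZMod (2^m))) : Gkm k m)^((Multiplicative.toAdd cg).val) := by
          rw [prodPow, one_pow, powM, mul_one, ZMod.natCast_val, ZMod.cast_id, ofAdd_toAdd]
        rw [hsplit, map_pow, hZfix, ← hsplit]
      cases g1 with
      | r i3 =>
        have hs : ((r i3, cg) : Gkm k m) = (r i3, 1) * (1, cg) := by
          rw [Prod.mk_mul_mk, mul_one, one_mul]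
        rw [MulAut.one_apply, hs, map_mul, hR, hC]
      | sr i3 =>
        have hs : ((sr i3, cg) : Gkm k m) = (sr i3, 1) * (1, cg) := by
          rw [Prod.mk_mul_mk, mul_one, one_mul]
        rw [MulAut.one_apply, hs, map_mul, hSR, hC]


theorem stmt_1 (n m : ℕ) (hn : 3 ≤ n) :
    IsPGroup 2 (MulAut (DC n m)) := by
  haveI : NeZero ((2:ℕ)^(n-1)) := ⟨pow_ne_zero _ two_ne_zero⟩
  haveI : NeZero ((2:ℕ)^m) := ⟨pow_ne_zero _ two_ne_zero⟩
  haveI : Finite (MulAut (DC n m)) :=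
    Finite.of_injective (fun f => (f : DC n m → DC n m)) DFunLike.coe_injective
  intro φ
  set q := orderOf φ with hqdef
  have hq0 : q ≠ 0 := (orderOf_pos φ).ne'
  set a := q.factorization 2 with hadef
  set b := q / 2^a with hbdef
  have hfac : 2^a * b = q := Nat.ordProj_mul_ordCompl_eq_self q 2
  have hbodd : Odd b := by
    rw [Nat.odd_iff]
    have h2 : ¬ 2 ∣ b := Nat.not_dvd_ordCompl Nat.prime_two hq0
    omega
  have hψb : (φ^(2^a))^b = 1 := by
    rw [← pow_mul, hfac, hqdef]
    exact pow_orderOf_eq_one φ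
  exact ⟨a, key (k := n-1) (m := m) (by omega) (φ^(2^a)) hbodd hψb⟩
end

section
/- Let D = ⟨x, y, z⟩ ≅ D_{2^n} × C_{2^m} with n ≥ 3, and let S ≤ D be a subgroup isomorphic to C_2 × C_2 × C_{2^m}. Then z ∈ S. -/
lemma zmod_two_pow_sol (k t : ℕ) (hkt : k = t + 1) (x : ZMod (2^k)) (h : x + x = 0) :
    x = 0 ∨ x = ((2^t : ℕ) : ZMod (2^k)) := by
  subst hkt
  haveI : NeZero (2^(t+1)) := ⟨pow_ne_zero _ two_ne_zero⟩
  have hx : ((x.val + x.val : ℕ) : ZMod (2^(t+1))) = 0 := by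
    push_cast [ZMod.natCast_zmod_val]; exact h
  rw [ZMod.natCast_eq_zero_iff] at hx
  have h2k : (2:ℕ)^(t+1) = 2 * 2^t := by rw [pow_succ]; ring
  have h2 : 2^t ∣ x.val := by
    obtain ⟨d, hd⟩ := hx
    have hd' : x.val + x.val = 2 * (2^t * d) := by rw [hd, h2k, mul_assoc]
    exact ⟨d, by omega⟩
  obtain ⟨c, hc⟩ := h2
  have hlt : x.val < 2^(t+1) := x.val_lt
  have hcb : c < 2 := by nlinarith [pow_pos (by norm_num : (0:ℕ) < 2) t]
  interval_cases c
  · left; rw [← ZMod.natCast_zmod_val x, hc]; simp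
  · right; rw [← ZMod.natCast_zmod_val x, hc]; simp

lemma zmod_two_pow_ne (k t : ℕ) (hkt : k = t + 1) : ((2^t : ℕ) : ZMod (2^k)) ≠ 0 := by
  subst hkt
  haveI : NeZero (2^(t+1)) := ⟨pow_ne_zero _ two_ne_zero⟩
  rw [Ne, ZMod.natCast_eq_zero_iff]
  intro h
  have := Nat.le_of_dvd (by positivity) h
  have : (2:ℕ)^t < 2^(t+1) := Nat.pow_lt_pow_right one_lt_two (by omega)
  omega

lemma zmod_two_pow_add_self (k t : ℕ) (hkt : k = t + 1) :
    ((2^t : ℕ) : ZMod (2^k)) + ((2^t : ℕ) : ZMod (2^k)) = 0 := by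
  subst hkt
  rw [← Nat.cast_add]
  have : 2^t + 2^t = 2^(t+1) := by rw [pow_succ]; ring
  rw [this, ZMod.natCast_self]

theorem stmt_4 (n m : ℕ) (hn : 3 ≤ n)
    (z : DC n m) (hz : z = (1, Multiplicative.ofAdd 1))
    (S : Subgroup (DC n m))
    (hS : Nonempty (S ≃* (Multiplicative (ZMod 2) × Multiplicative (ZMod 2) ×
      Multiplicative (ZMod (2 ^ m))))) :
    z ∈ S := by
  classical
  subst hz
  obtain ⟨φ⟩ := hS
  haveI : NeZero (2^(n-1)) := ⟨pow_ne_zero _ two_ne_zero⟩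
  haveI : NeZero (2^m) := ⟨pow_ne_zero _ two_ne_zero⟩
  -- trivial case m = 0
  rcases Nat.eq_zero_or_pos m with rfl | hm
  · have h1 : ((1, Multiplicative.ofAdd 1) : DC n 0) = 1 := by
      refine Prod.ext rfl ?_
      show Multiplicative.ofAdd (1 : ZMod (2^0)) = Multiplicative.ofAdd 0
      congr 1
    rw [h1]; exact one_mem S
  -- commutativity of S
  have hcomm : ∀ a b : ↥S, a * b = b * a := fun a b =>
    φ.injective (by rw [map_mul, map_mul, mul_comm])
  have hcommD : ∀ a b : ↥S,
      (a : DC n m).1 * (b : DC n m).1 = (b : DC n m).1 * (a : DC n m).1 := by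
    intro a b
    have h := congrArg (fun x : ↥S => (x : DC n m).1) (hcomm a b)
    simpa using h
  -- cardinality of S
  have hcardS : Nat.card ↥S = 2^(m+2) := by
    rw [Nat.card_congr φ.toEquiv]
    have : Nat.card (Multiplicative (ZMod 2) × Multiplicative (ZMod 2) ×
        Multiplicative (ZMod (2 ^ m))) = 2 * (2 * 2^m) := by
      have hA : Nat.card (Multiplicative (ZMod 2)) = 2 := Nat.card_zmod 2
      have hB : Nat.card (Multiplicative (ZMod (2^m))) = 2^m := Nat.card_zmod (2^m)
      rw [Nat.card_prod, Nat.card_prod, hA, hB]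
    rw [this]
    rw [pow_add]
    ring
  let f : ↥S →* DihedralGroup (2^(n-1)) :=
    (MonoidHom.fst (DihedralGroup (2^(n-1))) (Multiplicative (ZMod (2^m)))).comp S.subtype
  have hf : ∀ s : ↥S, f s = (s : DC n m).1 := fun s => rfl
  by_cases hrot : ∀ s : ↥S, ∃ j, (s : DC n m).1 = DihedralGroup.r j
  · -- all first coordinates are rotations : contradiction
    exfalso
    have hH : ((2^(m-1) : ℕ) : ZMod (2^m)) + ((2^(m-1) : ℕ) : ZMod (2^m)) = 0 :=
      zmod_two_pow_add_self _ _ (by omega)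
    have hHne : ((2^(m-1) : ℕ) : ZMod (2^m)) ≠ 0 := zmod_two_pow_ne _ _ (by omega)
    let Q : Finset (Multiplicative (ZMod 2) × Multiplicative (ZMod 2) ×
        Multiplicative (ZMod (2^m))) :=
      ({Multiplicative.ofAdd 0, Multiplicative.ofAdd 1} : Finset _) ×ˢ
      (({Multiplicative.ofAdd 0, Multiplicative.ofAdd 1} : Finset _) ×ˢ
       ({Multiplicative.ofAdd 0, Multiplicative.ofAdd ((2^(m-1) : ℕ) : ZMod (2^m))} : Finset _))
    have hQcard : Q.card = 8 := by
      have c1 : ({Multiplicative.ofAdd 0, Multiplicative.ofAdd 1} :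
          Finset (Multiplicative (ZMod 2))).card = 2 := by decide
      have c2 : ({Multiplicative.ofAdd 0,
          Multiplicative.ofAdd ((2^(m-1) : ℕ) : ZMod (2^m))} :
          Finset (Multiplicative (ZMod (2^m)))).card = 2 := by
        rw [Finset.card_insert_of_notMem, Finset.card_singleton]
        simp only [Finset.mem_singleton]
        intro h
        exact hHne (Multiplicative.ofAdd.injective h).symm
      rw [Finset.card_product, Finset.card_product, c1, c2]
    have hsq : ∀ q ∈ Q, q^2 = 1 := by
      intro q hq
      simp only [Q, Finset.mem_product, Finset.mem_insert, Finset.mem_singleton] at hq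
      obtain ⟨h1, h2, h3⟩ := hq
      have e1 : q.1^2 = 1 := by rcases h1 with h | h <;> rw [h] <;> decide
      have e2 : q.2.1^2 = 1 := by rcases h2 with h | h <;> rw [h] <;> decide
      have e3 : q.2.2^2 = 1 := by
        rcases h3 with h | h <;> rw [h, pow_two, ← ofAdd_add]
        · simp
        · rw [hH]; rfl
      have : q = (q.1, q.2.1, q.2.2) := rfl
      rw [this, Prod.pow_mk, Prod.pow_mk, e1, e2, e3]
      rfl
    have hmemT : ∀ q ∈ Q, ((φ.symm q : ↥S) : DC n m) ∈
        ({((DihedralGroup.r 0 : DihedralGroup (2^(n-1))), Multiplicative.ofAdd (0 : ZMod (2^m))),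
          (DihedralGroup.r ((2^(n-2) : ℕ) : ZMod (2^(n-1))), Multiplicative.ofAdd 0),
          (DihedralGroup.r 0, Multiplicative.ofAdd ((2^(m-1) : ℕ) : ZMod (2^m))),
          (DihedralGroup.r ((2^(n-2) : ℕ) : ZMod (2^(n-1))),
            Multiplicative.ofAdd ((2^(m-1) : ℕ) : ZMod (2^m)))} : Finset (DC n m)) := by
      intro q hq
      have hs2 : (φ.symm q)^2 = 1 := by
        apply φ.injective
        rw [map_pow, MulEquiv.apply_symm_apply, map_one]
        exact hsq q hq
      have hD2 : ((φ.symm q : ↥S) : DC n m)^2 = 1 := by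
        have h := congrArg (fun x : ↥S => (x : DC n m)) hs2
        simpa using h
      obtain ⟨j, hj⟩ := hrot (φ.symm q)
      have hD2' : (((φ.symm q : ↥S) : DC n m).1^2, ((φ.symm q : ↥S) : DC n m).2^2) =
          ((1 : DihedralGroup (2^(n-1))), (1 : Multiplicative (ZMod (2^m)))) := by
        rw [← Prod.pow_mk]
        exact hD2
      have hD21 := congrArg Prod.fst hD2'
      have hD22 := congrArg Prod.snd hD2'
      simp only at hD21 hD22
      rw [hj] at hD21
      rw [pow_two, DihedralGroup.r_mul_r] at hD21
      have hjj : j + j = 0 := by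
        have := DihedralGroup.r.injEq (j + j) 0 ▸ (DihedralGroup.one_def ▸ hD21)
        injection DihedralGroup.one_def ▸ hD21
      have hj2 : j = 0 ∨ j = ((2^(n-2) : ℕ) : ZMod (2^(n-1))) :=
        zmod_two_pow_sol _ _ (by omega) j hjj
      have huu : Multiplicative.toAdd (((φ.symm q : ↥S) : DC n m).2) +
          Multiplicative.toAdd (((φ.symm q : ↥S) : DC n m).2) = 0 := by
        have h := hD22
        rw [pow_two] at h
        exact Multiplicative.ofAdd.injective (by
          rw [ofAdd_add, ofAdd_toAdd]
          exact h.trans rfl)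
      have hu2 : Multiplicative.toAdd (((φ.symm q : ↥S) : DC n m).2) = 0 ∨
          Multiplicative.toAdd (((φ.symm q : ↥S) : DC n m).2) = ((2^(m-1) : ℕ) : ZMod (2^m)) :=
        zmod_two_pow_sol _ _ (by omega) _ huu
      have hxu : ((φ.symm q : ↥S) : DC n m) =
          (DihedralGroup.r j, Multiplicative.ofAdd
            (Multiplicative.toAdd (((φ.symm q : ↥S) : DC n m).2))) := by
        rw [ofAdd_toAdd, ← hj]
      rw [hxu]
      simp only [Finset.mem_insert, Finset.mem_singleton]
      rcases hj2 with rfl | rfl <;> rcases hu2 with h | h <;> rw [h] <;> tauto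
    have hinjF : Function.Injective
        (fun q : Multiplicative (ZMod 2) × Multiplicative (ZMod 2) ×
          Multiplicative (ZMod (2^m)) => ((φ.symm q : ↥S) : DC n m)) := by
      intro a b h
      exact φ.symm.injective (Subtype.coe_injective h)
    have hsub : Q.image (fun q => ((φ.symm q : ↥S) : DC n m)) ⊆
        ({((DihedralGroup.r 0 : DihedralGroup (2^(n-1))), Multiplicative.ofAdd (0 : ZMod (2^m))),
          (DihedralGroup.r ((2^(n-2) : ℕ) : ZMod (2^(n-1))), Multiplicative.ofAdd 0),
          (DihedralGroup.r 0, Multiplicative.ofAdd ((2^(m-1) : ℕ) : ZMod (2^m))),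
          (DihedralGroup.r ((2^(n-2) : ℕ) : ZMod (2^(n-1))),
            Multiplicative.ofAdd ((2^(m-1) : ℕ) : ZMod (2^m)))} : Finset (DC n m)) := by
      intro x hx
      obtain ⟨q, hq, rfl⟩ := Finset.mem_image.mp hx
      exact hmemT q hq
    have h8 : (Q.image (fun q => ((φ.symm q : ↥S) : DC n m))).card = 8 := by
      rw [Finset.card_image_of_injective _ hinjF, hQcard]
    have hT4 : ({((DihedralGroup.r 0 : DihedralGroup (2^(n-1))),
          Multiplicative.ofAdd (0 : ZMod (2^m))),
          (DihedralGroup.r ((2^(n-2) : ℕ) : ZMod (2^(n-1))), Multiplicative.ofAdd 0),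
          (DihedralGroup.r 0, Multiplicative.ofAdd ((2^(m-1) : ℕ) : ZMod (2^m))),
          (DihedralGroup.r ((2^(n-2) : ℕ) : ZMod (2^(n-1))),
            Multiplicative.ofAdd ((2^(m-1) : ℕ) : ZMod (2^m)))} : Finset (DC n m)).card ≤ 4 := by
      apply (Finset.card_insert_le _ _).trans
      apply Nat.succ_le_succ
      apply (Finset.card_insert_le _ _).trans
      apply Nat.succ_le_succ
      apply (Finset.card_insert_le _ _).trans
      simp
    have hle := Finset.card_le_card hsub
    omega
  · -- some first coordinate is a reflection
    push_neg at hrot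
    obtain ⟨s₀, hs₀⟩ := hrot
    obtain ⟨i₀, hi₀⟩ : ∃ i₀, (s₀ : DC n m).1 = DihedralGroup.sr i₀ := by
      cases h : (s₀ : DC n m).1 with
      | r j => exact absurd h (hs₀ j)
      | sr j => exact ⟨j, rfl⟩
    have hc0 : ((2^(n-2) : ℕ) : ZMod (2^(n-1))) ≠ 0 := zmod_two_pow_ne _ _ (by omega)
    have hR : ∀ s : ↥S, ∀ j, (s : DC n m).1 = DihedralGroup.r j →
        j = 0 ∨ j = ((2^(n-2) : ℕ) : ZMod (2^(n-1))) := by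
      intro s j hj
      refine zmod_two_pow_sol _ _ (by omega) j ?_
      have h := hcommD s s₀
      rw [hj, hi₀, DihedralGroup.r_mul_sr, DihedralGroup.sr_mul_r] at h
      injection h with h2
      linear_combination -h2
    have hSR : ∀ s : ↥S, ∀ j, (s : DC n m).1 = DihedralGroup.sr j →
        j = i₀ ∨ j = ((2^(n-2) : ℕ) : ZMod (2^(n-1))) + i₀ := by
      intro s j hj
      have hsol : j - i₀ = 0 ∨ j - i₀ = ((2^(n-2) : ℕ) : ZMod (2^(n-1))) := by
        refine zmod_two_pow_sol _ _ (by omega) _ ?_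
        have h := hcommD s s₀
        rw [hj, hi₀, DihedralGroup.sr_mul_sr, DihedralGroup.sr_mul_sr] at h
        injection h with h2
        linear_combination -h2
      rcases hsol with h | h
      · left; exact sub_eq_zero.mp h
      · right; linear_combination h
    let g : DihedralGroup (2^(n-1)) → ZMod 2 × ZMod 2 := fun x =>
      match x with
      | .r j => (0, if j = 0 then 0 else 1)
      | .sr j => (1, if j = i₀ then 0 else 1)
    have hinj : Function.Injective
        (fun x : ↥f.range => g (x : DihedralGroup (2^(n-1)))) := by
      rintro ⟨x, hx⟩ ⟨y, hy⟩ hxy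
      obtain ⟨s, rfl⟩ := hx
      obtain ⟨s', rfl⟩ := hy
      simp only [Subtype.mk.injEq] at hxy ⊢
      change g (s : DC n m).1 = g (s' : DC n m).1 at hxy
      refine Subtype.ext ?_
      change (s : DC n m).1 = (s' : DC n m).1
      cases hxs : (s : DC n m).1 with
      | r j =>
        cases hys : (s' : DC n m).1 with
        | r j' =>
          rw [hxs, hys] at hxy
          have hxy' : ((0 : ZMod 2), if j = 0 then (0 : ZMod 2) else 1) =
              ((0 : ZMod 2), if j' = 0 then (0 : ZMod 2) else 1) := hxy
          have h2 := congrArg Prod.snd hxy'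
          rcases hR s j hxs with rfl | rfl <;> rcases hR s' j' hys with rfl | rfl
          · rfl
          · rw [if_pos rfl, if_neg hc0] at h2; exact absurd h2 (by decide)
          · rw [if_pos rfl, if_neg hc0] at h2; exact absurd h2.symm (by decide)
          · rfl
        | sr j' =>
          rw [hxs, hys] at hxy
          have hxy' : ((0 : ZMod 2), if j = 0 then (0 : ZMod 2) else 1) =
              ((1 : ZMod 2), if j' = i₀ then (0 : ZMod 2) else 1) := hxy
          have h1 : (0 : ZMod 2) = 1 := congrArg Prod.fst hxy'
          exact absurd h1 (by decide)
      | sr j =>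
        cases hys : (s' : DC n m).1 with
        | r j' =>
          rw [hxs, hys] at hxy
          have hxy' : ((1 : ZMod 2), if j = i₀ then (0 : ZMod 2) else 1) =
              ((0 : ZMod 2), if j' = 0 then (0 : ZMod 2) else 1) := hxy
          have h1 : (1 : ZMod 2) = 0 := congrArg Prod.fst hxy'
          exact absurd h1 (by decide)
        | sr j' =>
          rw [hxs, hys] at hxy
          have hxy' : ((1 : ZMod 2), if j = i₀ then (0 : ZMod 2) else 1) =
              ((1 : ZMod 2), if j' = i₀ then (0 : ZMod 2) else 1) := hxy
          have h2 := congrArg Prod.snd hxy'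
          have hne : ((2^(n-2) : ℕ) : ZMod (2^(n-1))) + i₀ ≠ i₀ := fun h =>
            hc0 (by linear_combination h)
          rcases hSR s j hxs with rfl | rfl <;> rcases hSR s' j' hys with rfl | rfl
          · rfl
          · rw [if_pos rfl, if_neg hne] at h2; exact absurd h2 (by decide)
          · rw [if_pos rfl, if_neg hne] at h2; exact absurd h2.symm (by decide)
          · rfl
    have hrange : Nat.card ↥f.range ≤ 4 := by
      have h := Nat.card_le_card_of_injective _ hinj
      have h4 : Nat.card (ZMod 2 × ZMod 2) = 4 := by
        rw [Nat.card_prod, Nat.card_zmod]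
      omega
    have hkercard : 2^m ≤ Nat.card f.ker := by
      have hq := Subgroup.card_eq_card_quotient_mul_card_subgroup f.ker
      have he : Nat.card (↥S ⧸ f.ker) = Nat.card ↥f.range :=
        Nat.card_congr (QuotientGroup.quotientKerEquivRange f).toEquiv
      rw [hcardS, he] at hq
      have h22 : (2:ℕ)^(m+2) = 4 * 2^m := by rw [pow_add]; ring
      nlinarith [Nat.card f.ker]
    have hK0mem : ∀ x : DC n m,
        x ∈ (MonoidHom.fst (DihedralGroup (2^(n-1))) (Multiplicative (ZMod (2^m)))).ker ↔
          x.1 = 1 := fun x => Iff.rfl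
    have hK0card : Nat.card
        ↥(MonoidHom.fst (DihedralGroup (2^(n-1))) (Multiplicative (ZMod (2^m)))).ker = 2^m := by
      have e0 : ↥(MonoidHom.fst (DihedralGroup (2^(n-1)))
          (Multiplicative (ZMod (2^m)))).ker ≃ Multiplicative (ZMod (2^m)) :=
        { toFun := fun x => (x : DC n m).2
          invFun := fun u => ⟨(1, u), rfl⟩
          left_inv := by
            rintro ⟨⟨x1, x2⟩, hx⟩
            have h1 : x1 = 1 := hx
            subst h1
            rfl
          right_inv := fun u => rfl }
      rw [Nat.card_congr e0]
      exact Nat.card_zmod _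
    have hLcard : Nat.card ↥(Subgroup.map S.subtype f.ker) = Nat.card ↥f.ker :=
      (Nat.card_congr (Subgroup.equivMapOfInjective f.ker S.subtype
        S.subtype_injective).toEquiv).symm
    have hLK : Subgroup.map S.subtype f.ker ≤
        (MonoidHom.fst (DihedralGroup (2^(n-1))) (Multiplicative (ZMod (2^m)))).ker := by
      rintro x ⟨s, hs, rfl⟩
      exact hs
    have hLK0 : Subgroup.map S.subtype f.ker =
        (MonoidHom.fst (DihedralGroup (2^(n-1))) (Multiplicative (ZMod (2^m)))).ker :=
      Subgroup.eq_of_le_of_card_ge hLK (by rw [hK0card, hLcard]; exact hkercard)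
    have hzK0 : ((1, Multiplicative.ofAdd 1) : DC n m) ∈
        (MonoidHom.fst (DihedralGroup (2^(n-1))) (Multiplicative (ZMod (2^m)))).ker := rfl
    rw [← hLK0] at hzK0
    obtain ⟨s, _, hse⟩ := hzK0
    exact hse ▸ s.2
end

section
/- Let D = ⟨x, y, z⟩ ≅ D_{2^n} × C_{2^m} with n ≥ 3, and set Q₁ = ⟨x^{2^{n-2}}, y, z⟩ and Q₂ = ⟨x^{2^{n-2}}, x y, z⟩. Then every subgroup of D isomorphic to C_2 × C_2 × C_{2^m} is conjugate in D to Q₁ or to Q₂, and Q₁ and Q₂ are not conjugate in D. -/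
open Pointwise

open DihedralGroup


lemma two_torsion' (N M : ℕ) (hNM : N = 2*M) (hM : 0 < M) (i : ZMod N) (h : i + i = 0) :
    i = 0 ∨ i = ((M : ℕ) : ZMod N) := by
  subst hNM
  haveI : NeZero (2*M) := ⟨by omega⟩
  have hv : i.val < 2*M := ZMod.val_lt i
  have hc : ((i.val + i.val : ℕ) : ZMod (2*M)) = 0 := by
    push_cast [ZMod.natCast_zmod_val]; exact h
  obtain ⟨c, hcc⟩ := (ZMod.natCast_eq_zero_iff _ _).mp hc
  have hc1 : c = 0 ∨ c = 1 := by
    rcases Nat.lt_or_ge c 2 with h2 | h2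
    · omega
    · exfalso; nlinarith
  rcases hc1 with rfl | rfl
  · left
    have : i.val = 0 := by omega
    rw [← ZMod.natCast_zmod_val i, this, Nat.cast_zero]
  · right
    have : i.val = M := by omega
    rw [← ZMod.natCast_zmod_val i, this]

lemma two_torsion_pow (k : ℕ) (i : ZMod (2^k)) (h : i + i = 0) :
    i = 0 ∨ i = ((2^(k-1) : ℕ) : ZMod (2^k)) := by
  rcases Nat.eq_zero_or_pos k with rfl | hk
  · left; exact (by decide : ∀ j : ZMod (2^0), j = 0) i
  · exact two_torsion' _ _ (by rw [← pow_succ']; congr 1; omega) (Nat.pow_pos (by norm_num)) i h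

lemma r_inv {N : ℕ} (t : ZMod N) : (r t)⁻¹ = r (-t) :=
  inv_eq_of_mul_eq_one_right (by rw [r_mul_r, add_neg_cancel, one_def])

lemma sr_inv {N : ℕ} (t : ZMod N) : (sr t)⁻¹ = sr t :=
  inv_eq_of_mul_eq_one_right (sr_mul_self t)

def klein {N : ℕ} (h a : ZMod N) (hh : h + h = 0) : Subgroup (DihedralGroup N) where
  carrier := {1, r h, sr a, sr (a + h)}
  one_mem' := by left; rfl
  inv_mem' := by
    intro g hg
    have hself : g * g = 1 := by
      rcases hg with rfl | rfl | rfl | rfl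
      · simp
      · simp [r_mul_r, hh]
      · simp [sr_mul_sr]
      · simp [sr_mul_sr]
    rw [inv_eq_of_mul_eq_one_right hself]
    exact hg
  mul_mem' := by
    have hneg : -h = h := neg_eq_of_add_eq_zero_left hh
    rintro g g' (rfl | rfl | rfl | rfl) (rfl | rfl | rfl | rfl) <;>
      simp only [one_mul, mul_one, r_mul_r, r_mul_sr, sr_mul_r, sr_mul_sr,
        Set.mem_insert_iff, Set.mem_singleton_iff, one_def, r.injEq, sr.injEq] <;>
      first
        | (left; first | rfl | linear_combination hh | linear_combination -hh | linear_combination (2:ZMod N)*hh | ring1)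
        | (right; left; first | rfl | linear_combination hh | linear_combination -hh | linear_combination (2:ZMod N)*hh | ring1)
        | (right; right; left; first | rfl | linear_combination hh | linear_combination -hh | linear_combination (2:ZMod N)*hh | ring1)
        | (right; right; right; first | rfl | linear_combination hh | linear_combination -hh | linear_combination (2:ZMod N)*hh | ring1)
        | tauto

@[simp] lemma mem_klein {N : ℕ} {h a : ZMod N} {hh : h + h = 0} {g : DihedralGroup N} :
    g ∈ klein h a hh ↔ g = 1 ∨ g = r h ∨ g = sr a ∨ g = sr (a + h) := Iff.rfl

lemma card_klein {N : ℕ} [NeZero N] (h a : ZMod N) (hh : h + h = 0) (hne : h ≠ 0) :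
    Nat.card (klein h a hh) = 4 := by
  have e1 : (1 : DihedralGroup N) ≠ r h := by
    rw [one_def]; simp [-r_zero, hne.symm]
  have e2 : sr a ≠ sr (a + h) := by
    simp only [ne_eq, sr.injEq, left_eq_add]; exact hne
  have : (klein h a hh : Set (DihedralGroup N)) = {1, r h, sr a, sr (a + h)} := rfl
  have : Nat.card (klein h a hh) = Nat.card ({1, r h, sr a, sr (a + h)} : Set (DihedralGroup N)) := by
    congr 1
  rw [this, Nat.card_coe_set_eq]
  rw [Set.ncard_insert_of_notMem (by simp [one_def, -r_zero, hne.symm]), Set.ncard_insert_of_notMem (by simp),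
    Set.ncard_insert_of_notMem (by simp [e2]), Set.ncard_singleton]

lemma hh_all (n : ℕ) : (((2^(n-2) : ℕ)) : ZMod (2^(n-1))) + ((2^(n-2) : ℕ)) = 0 := by
  rcases Nat.lt_or_ge n 2 with h | h
  · interval_cases n <;> decide
  · rw [← Nat.cast_add, ZMod.natCast_eq_zero_iff]
    have : 2^(n-2) + 2^(n-2) = 2^(n-1) := by
      rw [← two_mul, ← pow_succ']; congr 1; omega
    rw [this]

lemma hne_lem {n : ℕ} (hn : 3 ≤ n) : (((2^(n-2) : ℕ)) : ZMod (2^(n-1))) ≠ 0 := by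
  intro h0
  have hdvd := (ZMod.natCast_eq_zero_iff _ _).mp h0
  have h1 := Nat.le_of_dvd (by positivity) hdvd
  have h2 := Nat.pow_lt_pow_right (by norm_num : 1 < 2) (show n-2 < n-1 by omega)
  omega

noncomputable def Wgrp (n m : ℕ) (a : ZMod (2^(n-1))) : Subgroup (DC n m) :=
  (klein ((2^(n-2) : ℕ)) a (hh_all n)).prod ⊤

lemma mem_Wgrp {n m : ℕ} {a : ZMod (2^(n-1))} {p : DC n m} :
    p ∈ Wgrp n m a ↔ p.1 ∈ klein ((2^(n-2) : ℕ)) a (hh_all n) := by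
  simp [Wgrp, Subgroup.mem_prod]

lemma card_Wgrp {n m : ℕ} (hn : 3 ≤ n) (a : ZMod (2^(n-1))) :
    Nat.card (Wgrp n m a) = 4 * 2^m := by
  haveI : NeZero (2^(n-1)) := ⟨by positivity⟩
  rw [Wgrp, Nat.card_congr (Subgroup.prodEquiv _ _).toEquiv, Nat.card_prod,
    card_klein _ _ _ (hne_lem hn), Subgroup.card_top,
    Nat.card_congr Multiplicative.toAdd, Nat.card_zmod]

lemma closure_W {n m : ℕ} (a : ZMod (2^(n-1))) :
    Subgroup.closure {((r ((2^(n-2) : ℕ)), 1) : DC n m), (sr a, 1), (1, Multiplicative.ofAdd 1)}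
      = Wgrp n m a := by
  haveI : NeZero (2^m) := ⟨by positivity⟩
  apply le_antisymm
  · rw [Subgroup.closure_le]
    rintro p (rfl | rfl | rfl) <;> rw [SetLike.mem_coe, mem_Wgrp] <;> simp [mem_klein]
  · rintro ⟨p1, p2⟩ hp
    rw [mem_Wgrp] at hp
    have hgen1 : ((r ((2^(n-2) : ℕ)), 1) : DC n m) ∈
        Subgroup.closure {((r ((2^(n-2) : ℕ)), 1) : DC n m), (sr a, 1), (1, Multiplicative.ofAdd 1)} :=
      Subgroup.subset_closure (by simp)
    have hgen2 : ((sr a, 1) : DC n m) ∈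
        Subgroup.closure {((r ((2^(n-2) : ℕ)), 1) : DC n m), (sr a, 1), (1, Multiplicative.ofAdd 1)} :=
      Subgroup.subset_closure (by simp)
    have hgen3 : ((1, Multiplicative.ofAdd 1) : DC n m) ∈
        Subgroup.closure {((r ((2^(n-2) : ℕ)), 1) : DC n m), (sr a, 1), (1, Multiplicative.ofAdd 1)} :=
      Subgroup.subset_closure (by simp)
    have h2 : (((1 : DihedralGroup (2^(n-1))), p2) : DC n m) ∈
        Subgroup.closure {((r ((2^(n-2) : ℕ)), 1) : DC n m), (sr a, 1), (1, Multiplicative.ofAdd 1)} := by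
      have key : (((1 : DihedralGroup (2^(n-1))), p2) : DC n m)
          = ((1, Multiplicative.ofAdd 1) : DC n m) ^ (Multiplicative.toAdd p2).val := by
        ext
        · simp
        · simp only [Prod.pow_snd, ← ofAdd_nsmul, nsmul_eq_mul, mul_one]
          rw [ZMod.natCast_zmod_val]
          simp
      rw [key]; exact pow_mem hgen3 _
    have h1 : ((p1, (1 : Multiplicative (ZMod (2^m)))) : DC n m) ∈
        Subgroup.closure {((r ((2^(n-2) : ℕ)), 1) : DC n m), (sr a, 1), (1, Multiplicative.ofAdd 1)} := by
      rcases (mem_klein).mp hp with h | h | h | h <;> rw [show p1 = _ from h]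
      · exact one_mem _
      · exact hgen1
      · exact hgen2
      · have : ((sr (a + ((2^(n-2):ℕ) : ZMod (2^(n-1)))), 1) : DC n m)
            = ((r ((2^(n-2) : ℕ)), 1) : DC n m) * (sr a, 1) := by
          have hneg : -(((2^(n-2):ℕ)) : ZMod (2^(n-1))) = ((2^(n-2):ℕ)) :=
            neg_eq_of_add_eq_zero_left (hh_all n)
          rw [Prod.mk_mul_mk, r_mul_sr, mul_one, sub_eq_add_neg, hneg]
        rw [this]; exact mul_mem hgen1 hgen2
    have : ((p1, p2) : DC n m) = (p1, 1) * (1, p2) := by simp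
    rw [this]; exact mul_mem h1 h2

lemma conj_Wgrp {n m : ℕ} (t a : ZMod (2^(n-1))) :
    MulAut.conj ((r t, 1) : DC n m) • Wgrp n m a = Wgrp n m (a - t - t) := by
  ext ⟨p1, p2⟩
  rw [Subgroup.mem_pointwise_smul_iff_inv_smul_mem, MulAut.smul_def, MulAut.conj_inv_apply,
    mem_Wgrp, mem_Wgrp]
  rcases p1 with i | j
  · have e1 : ((r t, 1) : DC n m)⁻¹ * (r i, p2) * (r t, 1) = (r i, p2) := by
      rw [Prod.inv_mk, r_inv, Prod.mk_mul_mk, Prod.mk_mul_mk, r_mul_r, r_mul_r]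
      simp only [one_mul, mul_one, inv_one]
      congr 1
      ring_nf
    rw [e1]
    simp [mem_klein]
  · have e1 : ((r t, 1) : DC n m)⁻¹ * (sr j, p2) * (r t, 1) = (sr (j + t + t), p2) := by
      rw [Prod.inv_mk, r_inv, Prod.mk_mul_mk, Prod.mk_mul_mk, r_mul_sr, sr_mul_r]
      simp only [one_mul, mul_one, inv_one]
      congr 1
      ring_nf
    rw [e1]
    simp only [mem_klein, one_def, sr.injEq, reduceCtorEq, false_or]
    constructor <;> rintro (h | h)
    · left; linear_combination h
    · right; linear_combination h
    · left; linear_combination h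
    · right; linear_combination h

lemma exists_shift {k : ℕ} [NeZero k] (a : ZMod k) :
    ∃ t : ZMod k, a - t - t = 0 ∨ a - t - t = -1 := by
  rcases Nat.even_or_odd a.val with he | ho
  · refine ⟨((a.val / 2 : ℕ) : ZMod k), Or.inl ?_⟩
    have e : ((a.val / 2 : ℕ) : ZMod k) + ((a.val / 2 : ℕ) : ZMod k) = ((a.val : ℕ) : ZMod k) := by
      rw [← Nat.cast_add]; congr 1; obtain ⟨w, hw⟩ := he; omega
    rw [sub_sub, e, ZMod.natCast_zmod_val, sub_self]
  · refine ⟨(((a.val + 1) / 2 : ℕ) : ZMod k), Or.inr ?_⟩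
    have e : (((a.val + 1) / 2 : ℕ) : ZMod k) + (((a.val + 1) / 2 : ℕ) : ZMod k)
        = ((a.val + 1 : ℕ) : ZMod k) := by
      rw [← Nat.cast_add]; congr 1; obtain ⟨w, hw⟩ := ho; omega
    rw [sub_sub, e]
    push_cast [ZMod.natCast_zmod_val]
    ring

lemma classify {n m : ℕ} (hn : 3 ≤ n) (S : Subgroup (DC n m))
    (φ : (Multiplicative (ZMod 2) × Multiplicative (ZMod 2) × Multiplicative (ZMod (2^m))) ≃* S) :
    ∃ a, S = Wgrp n m a := by
  classical
  haveI : NeZero (2^(n-1)) := ⟨by positivity⟩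
  haveI : NeZero (2^m) := ⟨by positivity⟩
  haveI : Finite (DC n m) := by
    haveI : Fintype (DihedralGroup (2^(n-1))) := inferInstance
    infer_instance
  have hNM : 2^(n-1) = 2 * 2^(n-2) := by rw [← pow_succ']; congr 1; omega
  -- abelian
  have hab : ∀ p q : DC n m, p ∈ S → q ∈ S → p * q = q * p := by
    intro p q hp hq
    have h := congrArg φ (mul_comm (φ.symm ⟨p, hp⟩) (φ.symm ⟨q, hq⟩))
    rw [map_mul, map_mul, φ.apply_symm_apply, φ.apply_symm_apply] at h
    exact Subtype.ext_iff.mp h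
  -- there is a reflection in S
  have hrefl : ∃ a c, ((sr a, c) : DC n m) ∈ S := by
    by_contra hcon
    push_neg at hcon
    have himg : ∀ v w : (Multiplicative (ZMod 2) × Multiplicative (ZMod 2) ×
        Multiplicative (ZMod (2^m))), v ≠ w → (φ v : DC n m) ≠ (φ w : DC n m) :=
      fun v w hvw h => hvw (φ.injective (Subtype.ext h))
    have hne1 : ∀ v : (Multiplicative (ZMod 2) × Multiplicative (ZMod 2) ×
        Multiplicative (ZMod (2^m))), v ≠ 1 → (φ v : DC n m) ≠ 1 := by
      intro v hv h
      exact hv (φ.injective (Subtype.ext (by rw [h, map_one, Subgroup.coe_one])))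
    set τ : Multiplicative (ZMod (2^m)) := Multiplicative.ofAdd ((2^(m-1) : ℕ) : ZMod (2^m)) with hτ
    set h' : ZMod (2^(n-1)) := ((2^(n-2) : ℕ) : ZMod (2^(n-1))) with hh'
    have key : ∀ v : (Multiplicative (ZMod 2) × Multiplicative (ZMod 2) ×
        Multiplicative (ZMod (2^m))), v * v = 1 → v ≠ 1 →
        ((φ v : DC n m) ∈ ({(r h', 1), (1, τ), (r h', τ)} : Finset (DC n m))) := by
      intro v hv2 hv1
      have hmem : (φ v : DC n m) ∈ S := (φ v).2
      have hsq : (φ v : DC n m) * (φ v : DC n m) = 1 := by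
        rw [← Subgroup.coe_mul, ← map_mul, hv2, map_one, Subgroup.coe_one]
      have hne1' : (φ v : DC n m) ≠ 1 := hne1 v hv1
      generalize hgen : (φ v : DC n m) = p at hmem hsq hne1' ⊢
      obtain ⟨p1, p2⟩ := p
      rcases p1 with i | j
      · have hsq1 := congrArg Prod.fst hsq
        have hsq2 := congrArg Prod.snd hsq
        simp only [Prod.fst_mul, Prod.snd_mul, Prod.fst_one, Prod.snd_one, r_mul_r] at hsq1 hsq2
        rw [one_def, r.injEq] at hsq1
        have hi := two_torsion' _ _ hNM (by positivity) i hsq1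
        have hc : Multiplicative.toAdd p2 + Multiplicative.toAdd p2 = 0 := by
          have := congrArg Multiplicative.toAdd hsq2
          simpa using this
        have hp2 := two_torsion_pow m (Multiplicative.toAdd p2) hc
        have hp2' : p2 = 1 ∨ p2 = τ := by
          rcases hp2 with h | h
          · left
            have := congrArg Multiplicative.ofAdd h
            simpa using this
          · right
            have := congrArg Multiplicative.ofAdd h
            simpa [hτ] using this
        rcases hi with rfl | rfl <;> rcases hp2' with rfl | rfl
        · exact absurd (Prod.ext one_def.symm rfl) hne1'
        · have e : ((r (0 : ZMod (2^(n-1))), τ) : DC n m)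
              = (((1 : DihedralGroup (2^(n-1))), τ) : DC n m) := by rw [one_def]
          rw [e]
          exact Finset.mem_insert.mpr (Or.inr (Finset.mem_insert_self _ _))
        · exact Finset.mem_insert_self _ _
        · exact Finset.mem_insert.mpr (Or.inr (Finset.mem_insert.mpr
            (Or.inr (Finset.mem_singleton_self _))))
      · exact absurd ((hcon j p2)) (fun hh => hh hmem)
    have hC2' : τ * τ = 1 := by
      rw [hτ, ← ofAdd_add]
      have := hh_all (m+1)
      rw [show m + 1 - 1 = m from rfl] at this
      rw [show (m+1)-2 = m-1 by omega] at this
      rw [this]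
      rfl
    set A : Multiplicative (ZMod 2) × Multiplicative (ZMod 2) × Multiplicative (ZMod (2^m)) :=
      (Multiplicative.ofAdd (1 : ZMod 2), 1, 1) with hA
    set B : Multiplicative (ZMod 2) × Multiplicative (ZMod 2) × Multiplicative (ZMod (2^m)) :=
      (1, Multiplicative.ofAdd (1 : ZMod 2), 1) with hB
    set Cc : Multiplicative (ZMod 2) × Multiplicative (ZMod 2) × Multiplicative (ZMod (2^m)) :=
      (1, 1, τ) with hC
    have h11 : (Multiplicative.ofAdd (1:ZMod 2)) * (Multiplicative.ofAdd (1:ZMod 2)) = 1 := by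
      decide
    have hA2 : A * A = 1 := by
      rw [hA, Prod.mk_mul_mk, Prod.mk_mul_mk, h11]; simp only [one_mul]; rfl
    have hB2 : B * B = 1 := by
      rw [hB, Prod.mk_mul_mk, Prod.mk_mul_mk, h11]; simp only [one_mul]; rfl
    have hAB2 : (A * B) * (A * B) = 1 := by
      rw [mul_mul_mul_comm, hA2, hB2, one_mul]
    have hC2 : Cc * Cc = 1 := by
      rw [hC, Prod.mk_mul_mk, Prod.mk_mul_mk, hC2']; simp only [one_mul]; rfl
    have hA1 : A ≠ 1 := fun h =>
      absurd (show Multiplicative.ofAdd (1:ZMod 2) = 1 from congrArg Prod.fst h) (by decide)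
    have hB1 : B ≠ 1 := fun h =>
      absurd (show Multiplicative.ofAdd (1:ZMod 2) = 1 from congrArg (fun p => p.2.1) h)
        (by decide)
    have hAB1 : A * B ≠ 1 := fun h =>
      absurd (show Multiplicative.ofAdd (1:ZMod 2) * 1 = 1 from congrArg Prod.fst h) (by decide)
    have hABne : A ≠ B := fun h =>
      absurd (show Multiplicative.ofAdd (1:ZMod 2) = 1 from congrArg Prod.fst h) (by decide)
    have hAABne : A ≠ A * B := fun h =>
      absurd (show (1 : Multiplicative (ZMod 2)) = 1 * Multiplicative.ofAdd (1:ZMod 2) from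
        congrArg (fun p => p.2.1) h) (by decide)
    have hBABne : B ≠ A * B := fun h =>
      absurd (show (1 : Multiplicative (ZMod 2)) = Multiplicative.ofAdd (1:ZMod 2) * 1 from
        congrArg Prod.fst h) (by decide)
    rcases Nat.eq_zero_or_pos m with hm0 | hm1
    · -- m = 0 : τ is trivial; A, B both must map to (r h', 1)
      have hτ1 : τ = 1 := by
        subst hm0
        rw [hτ]
        decide
      have hval : ∀ v, v * v = 1 → v ≠ 1 → (φ v : DC n m) = (r h', 1) := by
        intro v hv2 hv1
        have k := key v hv2 hv1
        simp only [Finset.mem_insert, Finset.mem_singleton] at k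
        have h1dc : (((1 : DihedralGroup (2^(n-1))), τ) : DC n m) = 1 := by
          rw [hτ1]; rfl
        rcases k with h | h | h
        · exact h
        · exact absurd (h.trans h1dc) (hne1 v hv1)
        · rw [h, hτ1]
      exact absurd ((hval A hA2 hA1).trans (hval B hB2 hB1).symm) (himg A B hABne)
    · -- m ≥ 1 : four distinct elements in a 3-element set
      have hC1 : Cc ≠ 1 := by
        intro h
        have h3 : τ = 1 := congrArg (fun p => p.2.2) h
        rw [hτ] at h3
        have h4 : ((2^(m-1) : ℕ) : ZMod (2^m)) = 0 := by
          have := congrArg Multiplicative.toAdd h3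
          simpa using this
        have hdvd := (ZMod.natCast_eq_zero_iff _ _).mp h4
        have h5 := Nat.le_of_dvd (by positivity) hdvd
        have h7 := Nat.pow_lt_pow_right (show 1 < 2 by norm_num) (show m - 1 < m by omega)
        omega
      have hACne : A ≠ Cc := fun h =>
        absurd (show Multiplicative.ofAdd (1:ZMod 2) = 1 from congrArg Prod.fst h) (by decide)
      have hBCne : B ≠ Cc := fun h =>
        absurd (show Multiplicative.ofAdd (1:ZMod 2) = 1 from congrArg (fun p => p.2.1) h)
          (by decide)
      have hABCne : A * B ≠ Cc := fun h =>
        absurd (show Multiplicative.ofAdd (1:ZMod 2) * 1 = 1 from congrArg Prod.fst h)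
          (by decide)
      have hcard : ({(φ A : DC n m), (φ B : DC n m), (φ (A*B) : DC n m), (φ Cc : DC n m)} :
          Finset (DC n m)).card = 4 := by
        rw [Finset.card_insert_of_notMem (by
          simp only [Finset.mem_insert, Finset.mem_singleton, not_or]
          exact ⟨himg A B hABne, himg A (A*B) hAABne, himg A Cc hACne⟩)]
        rw [Finset.card_insert_of_notMem (by
          simp only [Finset.mem_insert, Finset.mem_singleton, not_or]
          exact ⟨himg B (A*B) hBABne, himg B Cc hBCne⟩)]
        rw [Finset.card_insert_of_notMem (by
          simp only [Finset.mem_singleton]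
          exact himg (A*B) Cc hABCne)]
        rw [Finset.card_singleton]
      have hsub : ({(φ A : DC n m), (φ B : DC n m), (φ (A*B) : DC n m), (φ Cc : DC n m)} :
          Finset (DC n m)) ⊆ ({(r h', 1), (1, τ), (r h', τ)} : Finset (DC n m)) := by
        intro x hx
        simp only [Finset.mem_insert, Finset.mem_singleton] at hx
        rcases hx with rfl | rfl | rfl | rfl
        · exact key A hA2 hA1
        · exact key B hB2 hB1
        · exact key (A*B) hAB2 hAB1
        · exact key Cc hC2 hC1
      have hle := Finset.card_le_card hsub
      have ht : ({(r h', 1), (1, τ), (r h', τ)} : Finset (DC n m)).card ≤ 3 :=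
        le_trans (Finset.card_insert_le _ _) (Nat.succ_le_succ
          (le_trans (Finset.card_insert_le _ _) (Nat.succ_le_succ (Finset.card_singleton _).le)))
      omega
  -- S is contained in some Wgrp
  obtain ⟨a, c0, hac⟩ := hrefl
  have hle : S ≤ Wgrp n m a := by
    intro p hp
    rw [mem_Wgrp]
    have hcomm := hab p (sr a, c0) hp hac
    obtain ⟨p1, p2⟩ := p
    have hfst := congrArg Prod.fst hcomm
    simp only [Prod.fst_mul] at hfst
    rcases p1 with i | j
    · rw [r_mul_sr, sr_mul_r, sr.injEq] at hfst
      have h2 : i + i = 0 := by linear_combination -hfst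
      rcases two_torsion' _ _ hNM (by positivity) i h2 with rfl | rfl
      · rw [mem_klein]; left; rw [one_def]
      · rw [mem_klein]; right; left; rfl
    · rw [sr_mul_sr, sr_mul_sr, r.injEq] at hfst
      have h2 : (j - a) + (j - a) = 0 := by linear_combination -hfst
      rcases two_torsion' _ _ hNM (by positivity) (j - a) h2 with h3 | h3
      · rw [mem_klein]; right; right; left
        rw [sr.injEq]; linear_combination h3
      · rw [mem_klein]; right; right; right
        rw [sr.injEq]; linear_combination h3
  have hcardS : Nat.card S = 4 * 2^m := by
    have hmz : ∀ k : ℕ, Nat.card (Multiplicative (ZMod k)) = k := fun k => by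
      rw [Nat.card_congr Multiplicative.toAdd, Nat.card_zmod]
    rw [Nat.card_congr φ.toEquiv.symm, Nat.card_prod, Nat.card_prod]
    simp only [hmz]
    ring
  exact ⟨a, Subgroup.eq_of_le_of_card_ge hle (by rw [hcardS, card_Wgrp hn])⟩

lemma parity_lem {n : ℕ} (hn : 3 ≤ n) (w : ZMod (2^(n-1))) :
    w + w ≠ -1 ∧ w + w ≠ -1 + ((2^(n-2) : ℕ) : ZMod (2^(n-1))) := by
  have hdvd : (2:ℕ) ∣ 2^(n-1) := ⟨2^(n-2), by rw [← pow_succ']; congr 1; omega⟩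
  set π := ZMod.castHom hdvd (ZMod 2) with hπ
  have hself : ∀ x : ZMod 2, x + x = 0 := by decide
  have hπh : π (((2^(n-2) : ℕ)) : ZMod (2^(n-1))) = 0 := by
    rw [map_natCast, ZMod.natCast_eq_zero_iff]
    exact ⟨2^(n-3), by rw [← pow_succ']; congr 1; omega⟩
  constructor <;> intro h <;> have h2 := congrArg π h
  · rw [map_add, hself, map_neg, map_one] at h2
    exact absurd h2 (by decide)
  · rw [map_add, hself, map_add, map_neg, map_one, hπh] at h2
    exact absurd h2 (by decide)

theorem stmt_5 (n m : ℕ) (hn : 3 ≤ n)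
    (x y z : DC n m) (hx : x = (DihedralGroup.r 1, 1))
    (hy : y = (DihedralGroup.sr 0, 1))
    (hz : z = (1, Multiplicative.ofAdd 1))
    (Q₁ Q₂ : Subgroup (DC n m))
    (hQ₁ : Q₁ = Subgroup.closure {x ^ (2 ^ (n - 2)), y, z})
    (hQ₂ : Q₂ = Subgroup.closure {x ^ (2 ^ (n - 2)), x * y, z}) :
    (∀ S : Subgroup (DC n m),
      Nonempty (S ≃* (Multiplicative (ZMod 2) × Multiplicative (ZMod 2) ×
        Multiplicative (ZMod (2 ^ m)))) →
      ∃ g : DC n m, MulAut.conj g • S = Q₁ ∨ MulAut.conj g • S = Q₂) ∧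
    ¬ ∃ g : DC n m, MulAut.conj g • Q₁ = Q₂ := by
  haveI : NeZero (2^(n-1)) := ⟨by positivity⟩
  haveI : NeZero (2^m) := ⟨by positivity⟩
  subst hx hy hz
  have hxpow : ((r 1, 1) : DC n m) ^ (2^(n-2))
      = ((r (((2^(n-2) : ℕ)) : ZMod (2^(n-1))), 1) : DC n m) := by
    ext
    · rw [Prod.pow_fst, r_one_pow]
    · rw [Prod.pow_snd, one_pow]
  have hxy : ((r 1, 1) : DC n m) * ((sr 0, 1) : DC n m) = ((sr (-1), 1) : DC n m) := by
    rw [Prod.mk_mul_mk, r_mul_sr, mul_one, zero_sub]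
  have hQ1W : Q₁ = Wgrp n m 0 := by rw [hQ₁, hxpow, ← closure_W 0]
  have hQ2W : Q₂ = Wgrp n m (-1) := by rw [hQ₂, hxpow, hxy, ← closure_W (-1)]
  constructor
  · intro S hS
    obtain ⟨φ⟩ := hS
    obtain ⟨a, rfl⟩ := classify hn S φ.symm
    obtain ⟨t, ht⟩ := exists_shift a
    refine ⟨(r t, 1), ?_⟩
    rw [conj_Wgrp t a]
    rcases ht with h | h
    · left; rw [h, hQ1W]
    · right; rw [h, hQ2W]
  · rintro ⟨g, hg⟩
    rw [hQ1W, hQ2W] at hg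
    have hy0 : ((sr 0, 1) : DC n m) ∈ Wgrp n m 0 := by
      rw [mem_Wgrp, mem_klein]; right; right; left; rfl
    have hmem := Subgroup.smul_mem_pointwise_smul _ (MulAut.conj g) _ hy0
    rw [hg, MulAut.smul_def, MulAut.conj_apply] at hmem
    obtain ⟨g1, g2⟩ := g
    rw [mem_Wgrp] at hmem
    have hfst : ((g1, g2) * ((sr 0, 1) : DC n m) * (g1, g2)⁻¹).1 = g1 * sr 0 * g1⁻¹ := by
      rw [Prod.fst_mul, Prod.fst_mul, Prod.fst_inv]
    rw [hfst] at hmem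
    rcases g1 with t | u
    · rw [r_mul_sr, r_inv, sr_mul_r, mem_klein] at hmem
      rcases hmem with h | h | h | h
      · exact absurd (h.trans one_def) (by simp [-r_zero])
      · exact absurd h (by simp)
      · rw [sr.injEq] at h
        exact absurd (show (-t) + (-t) = -1 by linear_combination h) (parity_lem hn (-t)).1
      · rw [sr.injEq] at h
        exact absurd (show (-t) + (-t) = -1 + ((2^(n-2) : ℕ) : ZMod (2^(n-1)))
          by linear_combination h) (parity_lem hn (-t)).2
    · rw [sr_inv, sr_mul_sr, r_mul_sr, mem_klein] at hmem
      rcases hmem with h | h | h | h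
      · exact absurd (h.trans one_def) (by simp [-r_zero])
      · exact absurd h (by simp)
      · rw [sr.injEq] at h
        exact absurd (show u + u = -1 by linear_combination h) (parity_lem hn u).1
      · rw [sr.injEq] at h
        exact absurd (show u + u = -1 + ((2^(n-2) : ℕ) : ZMod (2^(n-1)))
          by linear_combination h) (parity_lem hn u).2
end

section
/- Let Q = C_2 × C_2 × C_{2^m} with m ≥ 0 and m ≠ 1. Then |Aut(Q)| = 2^k · 3 for some natural number k; in particular the only prime divisors of |Aut(Q)| are 2 and 3. -/
namespace Stmt8Aux

open Function AddMonoidHom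

abbrev V : Type := ZMod 2 × ZMod 2
abbrev C (m : ℕ) : Type := ZMod (2 ^ m)
abbrev G (m : ℕ) : Type := V × C m

lemma V_add_self (v : V) : v + v = 0 := by
  obtain ⟨a, b⟩ := v
  have h : ∀ x : ZMod 2, x + x = 0 := by decide
  exact Prod.ext (h a) (h b)

/-- In `ZMod (2^m)` with `m ≠ 1`, every 2-torsion element is a double. -/
lemma torsion_double {m : ℕ} (hm : m ≠ 1) (x : C m) (hx : x + x = 0) :
    ∃ y : C m, x = y + y := by
  rcases m with _ | m
  · refine ⟨0, ?_⟩
    have h : ∀ a b : ZMod (2 ^ 0), a = b := by decide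
    exact h _ _
  rcases m with _ | k
  · exact absurd rfl hm
  -- now m = k + 2
  have hval : ((x.val + x.val : ℕ) : ZMod (2 ^ (k + 2))) = 0 := by
    push_cast [ZMod.natCast_zmod_val]
    exact hx
  have hdvd : 2 ^ (k + 2) ∣ x.val + x.val := (ZMod.natCast_eq_zero_iff _ _).mp hval
  rw [← two_mul] at hdvd
  have hdvd2 : 2 ^ (k + 1) ∣ x.val := by
    rcases hdvd with ⟨t, ht⟩
    refine ⟨t, ?_⟩
    have : 2 * x.val = 2 * (2 ^ (k + 1) * t) := by
      rw [ht]; ring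
    exact Nat.eq_of_mul_eq_mul_left (by norm_num) this
  rcases hdvd2 with ⟨t, ht⟩
  refine ⟨((2 ^ k * t : ℕ) : ZMod (2 ^ (k + 2))), ?_⟩
  have : x = ((x.val : ℕ) : ZMod (2 ^ (k + 2))) := (ZMod.natCast_zmod_val x).symm
  rw [this, ht]
  push_cast
  ring

/-- Every additive endomorphism of `ZMod n` is right multiplication by its value at 1. -/
lemma endo_eq {n : ℕ} [NeZero n] (δ : ZMod n →+ ZMod n) (x : ZMod n) :
    δ x = x * δ 1 := by
  have hx : ((x.val : ℕ) : ZMod n) = x := ZMod.natCast_zmod_val x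
  calc δ x = δ (x.val • (1 : ZMod n)) := by rw [nsmul_eq_mul, mul_one, hx]
    _ = x.val • δ 1 := by rw [map_nsmul]
    _ = ((x.val : ℕ) : ZMod n) * δ 1 := nsmul_eq_mul _ _
    _ = x * δ 1 := by rw [hx]

variable (m : ℕ)

/-- Endomorphism of `V × C m` built from a 2×2 matrix of homomorphisms. -/
def ofQuad (α : V →+ V) (β : C m →+ V) (γ : V →+ C m) (δ : C m →+ C m) :
    G m →+ G m :=
  AddMonoidHom.prod
    (α.comp (AddMonoidHom.fst V (C m)) + β.comp (AddMonoidHom.snd V (C m)))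
    (γ.comp (AddMonoidHom.fst V (C m)) + δ.comp (AddMonoidHom.snd V (C m)))

lemma ofQuad_apply (α : V →+ V) (β : C m →+ V) (γ : V →+ C m) (δ : C m →+ C m)
    (v : V) (c : C m) : ofQuad m α β γ δ (v, c) = (α v + β c, γ v + δ c) := rfl

def quadEquiv : (G m →+ G m) ≃ ((V →+ V) × (C m →+ V) × (V →+ C m) × (C m →+ C m)) where
  toFun f :=
    ((AddMonoidHom.fst V (C m)).comp (f.comp (AddMonoidHom.inl V (C m))),
     (AddMonoidHom.fst V (C m)).comp (f.comp (AddMonoidHom.inr V (C m))),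
     (AddMonoidHom.snd V (C m)).comp (f.comp (AddMonoidHom.inl V (C m))),
     (AddMonoidHom.snd V (C m)).comp (f.comp (AddMonoidHom.inr V (C m))))
  invFun q := ofQuad m q.1 q.2.1 q.2.2.1 q.2.2.2
  left_inv f := by
    refine AddMonoidHom.ext fun x => ?_
    obtain ⟨v, c⟩ := x
    have h : f (v, c) = f (v, 0) + f (0, c) := by
      rw [← map_add]
      norm_num
    show ((f (v, 0)).1 + (f (0, c)).1, (f (v, 0)).2 + (f (0, c)).2) = f (v, c)
    rw [h]; rfl
  right_inv q := by
    obtain ⟨α, β, γ, δ⟩ := q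
    refine Prod.ext ?_ (Prod.ext ?_ (Prod.ext ?_ ?_))
    · refine AddMonoidHom.ext fun v => ?_
      show α v + β 0 = α v
      rw [map_zero, add_zero]
    · refine AddMonoidHom.ext fun c => ?_
      show α 0 + β c = β c
      rw [map_zero, zero_add]
    · refine AddMonoidHom.ext fun v => ?_
      show γ v + δ 0 = γ v
      rw [map_zero, add_zero]
    · refine AddMonoidHom.ext fun c => ?_
      show γ 0 + δ c = δ c
      rw [map_zero, zero_add]

lemma bij_iff (hm : m ≠ 1) (α : V →+ V) (β : C m →+ V) (γ : V →+ C m)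
    (δ : C m →+ C m) :
    Function.Bijective (ofQuad m α β γ δ) ↔ Function.Bijective α ∧ IsUnit (δ 1) := by
  have hγtor : ∀ v : V, γ v + γ v = 0 := by
    intro v
    rw [← map_add, V_add_self, map_zero]
  constructor
  · rintro ⟨hinj, hsurj⟩
    -- first, δ 1 is a unit
    obtain ⟨⟨v, c⟩, hp⟩ := hsurj (0, 1)
    rw [ofQuad_apply] at hp
    have h2 : γ v + δ c = 1 := congrArg Prod.snd hp
    obtain ⟨y, hy⟩ := torsion_double hm (γ v) (hγtor v)
    have hδc : δ c = 1 - (y + y) := by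
      rw [← hy]; linear_combination h2
    have hnil : IsNilpotent (y + y : C m) := by
      refine ⟨m, ?_⟩
      have h2m : ((2 ^ m : ℕ) : C m) = 0 := ZMod.natCast_self _
      calc (y + y) ^ m = ((2 ^ m : ℕ) : C m) * y ^ m := by push_cast; ring
        _ = 0 := by rw [h2m, zero_mul]
    have hu1 : IsUnit (δ c) := by
      rw [hδc]; exact hnil.isUnit_one_sub
    rw [endo_eq] at hu1
    have hu : IsUnit (δ 1) := isUnit_of_mul_isUnit_right hu1
    refine ⟨?_, hu⟩
    -- α is injective, hence bijective
    rw [← Finite.injective_iff_bijective]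
    rw [injective_iff_map_eq_zero]
    intro v0 hv0
    obtain ⟨y, hy⟩ := torsion_double hm (γ v0) (hγtor v0)
    set u := hu.unit with hu_def
    have hδ1 : δ 1 = ↑u := (IsUnit.unit_spec hu).symm
    set c0 : C m := y * ↑u⁻¹ + y * ↑u⁻¹ with hc0
    have hβ : β c0 = 0 := by
      rw [hc0, map_add, V_add_self]
    have hδ : δ c0 = γ v0 := by
      rw [endo_eq, hδ1, hc0, hy]
      have : (↑u⁻¹ * ↑u : C m) = 1 := Units.inv_mul u
      linear_combination (2 * y) * this
    have heq : ofQuad m α β γ δ (v0, 0) = ofQuad m α β γ δ (0, c0) := by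
      rw [ofQuad_apply, ofQuad_apply, hv0, hβ, hδ, map_zero, map_zero, map_zero]
      simp
    have := hinj heq
    exact congrArg Prod.fst this
  · rintro ⟨hα, hu⟩
    set u := hu.unit with hu_def
    have hδ1 : δ 1 = ↑u := (IsUnit.unit_spec hu).symm
    rw [← Finite.injective_iff_bijective, injective_iff_map_eq_zero]
    rintro ⟨v, c⟩ h
    rw [ofQuad_apply] at h
    have h1 : α v + β c = 0 := congrArg Prod.fst h
    have h2 : γ v + δ c = 0 := congrArg Prod.snd h
    obtain ⟨y, hy⟩ := torsion_double hm (γ v) (hγtor v)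
    have hc : c = -(y * ↑u⁻¹) + -(y * ↑u⁻¹) := by
      have hcu : c * ↑u = -(y + y) := by
        rw [← hy, ← hδ1, ← endo_eq]
        linear_combination h2
      have huu : (↑u * ↑u⁻¹ : C m) = 1 := Units.mul_inv u
      calc c = c * (↑u * ↑u⁻¹) := by rw [huu, mul_one]
        _ = (c * ↑u) * ↑u⁻¹ := by ring
        _ = -(y + y) * ↑u⁻¹ := by rw [hcu]
        _ = -(y * ↑u⁻¹) + -(y * ↑u⁻¹) := by ring
    have hβc : β c = 0 := by
      rw [hc, map_add, V_add_self]
    have hαv : α v = 0 := by rwa [hβc, add_zero] at h1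
    have hv : v = 0 := by
      have := hα.injective (a₁ := v) (a₂ := 0) (by rw [hαv, map_zero])
      exact this
    have hδc : δ c = 0 := by
      rw [hv, map_zero, zero_add] at h2
      exact h2
    have hcz : c = 0 := by
      rw [endo_eq, hδ1] at hδc
      have := congrArg (· * (↑u⁻¹ : C m)) hδc
      simpa [mul_assoc, Units.mul_inv] using this
    rw [hv, hcz]
    rfl

/-- `Fintype` structure on `V →+ V` (computable, for `decide`). -/
def homEquivFun : (V →+ V) ≃ {f : V → V // f 0 = 0 ∧ ∀ a b, f (a + b) = f a + f b} where
  toFun f := ⟨f, f.map_zero, f.map_add⟩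
  invFun f := ⟨⟨f.1, f.2.1⟩, f.2.2⟩
  left_inv f := by rcases f with ⟨⟨f, h0⟩, ha⟩; rfl
  right_inv f := rfl

instance : Fintype (V →+ V) := Fintype.ofEquiv _ homEquivFun.symm

lemma card_bij_V : Nat.card {α : V →+ V // Function.Bijective α} = 6 := by
  rw [Nat.card_eq_fintype_card]
  decide

lemma card_two_torsion_pow {X : Type} [AddCommGroup X] [Finite X]
    (h : ∀ x : X, x + x = 0) : ∃ a : ℕ, Nat.card X = 2 ^ a := by
  have : Fact (Nat.Prime 2) := ⟨Nat.prime_two⟩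
  have hp : IsPGroup 2 (Multiplicative X) := by
    intro g
    refine ⟨1, ?_⟩
    show g ^ 2 ^ 1 = 1
    have hg := h g.toAdd
    rw [pow_one, sq]
    exact congrArg Multiplicative.ofAdd hg
  obtain ⟨n, hn⟩ := IsPGroup.iff_card.mp hp
  exact ⟨n, by rw [← hn]; exact Nat.card_congr Multiplicative.toAdd.symm⟩

instance : Finite (C m →+ V) := Finite.of_injective _ DFunLike.coe_injective
instance : Finite (V →+ C m) := Finite.of_injective _ DFunLike.coe_injective

lemma card_hom_CV : ∃ a : ℕ, Nat.card (C m →+ V) = 2 ^ a := by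
  refine card_two_torsion_pow ?_
  intro f
  ext x
  · show (f x + f x).1 = 0
    rw [V_add_self]; rfl
  · show (f x + f x).2 = 0
    rw [V_add_self]; rfl

lemma card_hom_VC : ∃ a : ℕ, Nat.card (V →+ C m) = 2 ^ a := by
  refine card_two_torsion_pow ?_
  intro f
  ext v
  show f v + f v = 0
  rw [← map_add, V_add_self, map_zero]

noncomputable def unitSubtypeEquiv {R : Type} [CommMonoid R] : Rˣ ≃ {c : R // IsUnit c} where
  toFun u := ⟨↑u, u.isUnit⟩
  invFun c := c.2.unit
  left_inv u := Units.ext (IsUnit.unit_spec u.isUnit)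
  right_inv c := Subtype.ext (IsUnit.unit_spec c.2)

lemma card_units : ∃ a : ℕ, Nat.card {c : C m // IsUnit c} = 2 ^ a := by
  have h := Nat.card_congr (unitSubtypeEquiv (R := C m)).symm
  rcases m with _ | k
  · refine ⟨0, ?_⟩
    rw [h]
    have hs : Subsingleton (C 0)ˣ := by
      constructor
      intro a b
      have h : ∀ x y : ZMod (2 ^ 0), x = y := by decide
      exact Units.ext (h _ _)
    have := Nat.card_eq_one_iff_unique.mpr ⟨hs, ⟨1⟩⟩
    rw [this, pow_zero]
  · refine ⟨k, ?_⟩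
    rw [h, Nat.card_eq_fintype_card, ZMod.card_units_eq_totient,
      Nat.totient_prime_pow Nat.prime_two (Nat.succ_pos k)]
    simp

noncomputable def deltaEquiv : {δ : C m →+ C m // IsUnit (δ 1)} ≃ {c : C m // IsUnit c} where
  toFun δ := ⟨δ.1 1, δ.2⟩
  invFun c := ⟨AddMonoidHom.mulRight (c : C m), by simpa using c.2⟩
  left_inv δ := by
    refine Subtype.ext ?_
    ext x
    show x * δ.1 1 = δ.1 x
    exact (endo_eq δ.1 x).symm
  right_inv c := by
    refine Subtype.ext ?_
    show (1 : C m) * ↑c = ↑c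
    rw [one_mul]

noncomputable def autEquivBij : AddAut (G m) ≃ {f : G m →+ G m // Function.Bijective f} where
  toFun σ := ⟨σ.toAddMonoidHom, σ.bijective⟩
  invFun f := AddEquiv.ofBijective f.1 f.2
  left_inv σ := AddEquiv.ext fun x => rfl
  right_inv f := Subtype.ext (AddMonoidHom.ext fun x => rfl)

def quadSplitEquiv :
    {q : (V →+ V) × (C m →+ V) × (V →+ C m) × (C m →+ C m) //
      Function.Bijective q.1 ∧ IsUnit (q.2.2.2 1)} ≃
    ({α : V →+ V // Function.Bijective α} × (C m →+ V) × (V →+ C m) ×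
      {δ : C m →+ C m // IsUnit (δ 1)}) where
  toFun x := (⟨x.1.1, x.2.1⟩, x.1.2.1, x.1.2.2.1, ⟨x.1.2.2.2, x.2.2⟩)
  invFun x := ⟨(x.1.1, x.2.1, x.2.2.1, x.2.2.2.1), x.1.2, x.2.2.2.2⟩
  left_inv x := rfl
  right_inv x := rfl

lemma card_addAut (hm : m ≠ 1) :
    ∃ k : ℕ, Nat.card (AddAut (G m)) = 2 ^ k * 3 := by
  obtain ⟨a, ha⟩ := card_hom_CV m
  obtain ⟨b, hb⟩ := card_hom_VC m
  obtain ⟨c, hc⟩ := card_units m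
  refine ⟨1 + a + b + c, ?_⟩
  have e2 : {f : G m →+ G m // Function.Bijective f} ≃
      {q : (V →+ V) × (C m →+ V) × (V →+ C m) × (C m →+ C m) //
        Function.Bijective q.1 ∧ IsUnit (q.2.2.2 1)} := by
    refine (quadEquiv m).subtypeEquiv ?_
    intro f
    have hf : f = ofQuad m ((quadEquiv m) f).1 ((quadEquiv m) f).2.1
        ((quadEquiv m) f).2.2.1 ((quadEquiv m) f).2.2.2 := ((quadEquiv m).left_inv f).symm
    conv_lhs => rw [hf]
    exact bij_iff m hm _ _ _ _
  calc Nat.card (AddAut (G m))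
      = Nat.card ({α : V →+ V // Function.Bijective α} × (C m →+ V) × (V →+ C m) ×
        {δ : C m →+ C m // IsUnit (δ 1)}) := by
        refine Nat.card_congr ?_
        exact ((autEquivBij m).trans e2).trans (quadSplitEquiv m)
    _ = 6 * (2 ^ a * (2 ^ b * 2 ^ c)) := by
        rw [Nat.card_prod, Nat.card_prod, Nat.card_prod, card_bij_V, ha, hb,
          Nat.card_congr (deltaEquiv m), hc]
    _ = 2 ^ (1 + a + b + c) * 3 := by ring

end Stmt8Aux

theorem stmt_8 (m : ℕ) (hm : m ≠ 1) :
    ∃ k : ℕ, Nat.card (MulAut (Multiplicative (ZMod 2) × Multiplicative (ZMod 2) ×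
      Multiplicative (ZMod (2 ^ m)))) = 2 ^ k * 3 := by
  obtain ⟨k, hk⟩ := Stmt8Aux.card_addAut m hm
  refine ⟨k, ?_⟩
  rw [← hk]
  -- chain of cardinality-preserving equivalences
  have e1 : Multiplicative (ZMod 2 × ZMod 2 × ZMod (2 ^ m)) ≃*
      (Multiplicative (ZMod 2) × Multiplicative (ZMod 2) × Multiplicative (ZMod (2 ^ m))) :=
    (MulEquiv.prodMultiplicative (ZMod 2) (ZMod 2 × ZMod (2 ^ m))).trans
      ((MulEquiv.refl (Multiplicative (ZMod 2))).prodCongr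
        (MulEquiv.prodMultiplicative (ZMod 2) (ZMod (2 ^ m))))
  have e2 : MulAut (Multiplicative (ZMod 2) × Multiplicative (ZMod 2) ×
      Multiplicative (ZMod (2 ^ m))) ≃*
      MulAut (Multiplicative (ZMod 2 × ZMod 2 × ZMod (2 ^ m))) :=
    MulAut.congr e1.symm
  have e3 : (ZMod 2 × ZMod 2 × ZMod (2 ^ m)) ≃+ Stmt8Aux.G m :=
    (AddEquiv.prodAssoc (M := ZMod 2) (N := ZMod 2) (P := ZMod (2 ^ m))).symm
  have e4 : AddAut (ZMod 2 × ZMod 2 × ZMod (2 ^ m)) ≃+ AddAut (Stmt8Aux.G m) :=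
    AddAut.congr e3
  calc Nat.card (MulAut (Multiplicative (ZMod 2) × Multiplicative (ZMod 2) ×
      Multiplicative (ZMod (2 ^ m))))
      = Nat.card (MulAut (Multiplicative (ZMod 2 × ZMod 2 × ZMod (2 ^ m)))) :=
        Nat.card_congr e2.toEquiv
    _ = Nat.card (AddAut (ZMod 2 × ZMod 2 × ZMod (2 ^ m))) :=
        Nat.card_congr (AddEquiv.toMultiplicative).symm
    _ = Nat.card (AddAut (Stmt8Aux.G m)) := Nat.card_congr e4.toEquiv
end
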